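/- arXiv:1609.04176 — 4 statements merged into one kernel-verified Lean document; each statement's English description precedes it below -/
import Mathlib

section
/- For every RB-template P (in which each letter of Σ_rdz labels at most one edge), the set exec_fin(P) of finite executions of the induced RB-system, viewed as a language of finite words over the alphabet R of edges of P, is a regular language: it is recognized by the nondeterministic finite automaton A_P^fin whose state set is the state set S^⊸ of the reachability-unwinding P^⊸ (of size at most |S|·2^{|S|}), whose initial states are I^⊸, whose every state is accepting, and whose transitions are (s, (s^◦,σ,t^◦), t) for every edge (s,σ,t) of P^⊸. -/
/-! ### Core definitions: RB-templates and RB-systems -/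

/-- Edge labels: a rendezvous letter `a_j` (an action together with an index in `[k]`),
or the broadcast letter `𝔟` (represented by `Sum.inr ()`). -/
abbrev Lab (k : ℕ) (A : Type) := (A × Fin k) ⊕ Unit

/-- Edges of a labeled transition system over states `S`. -/
abbrev EdgeT (k : ℕ) (A S : Type) := S × Lab k A × S

/-- An RB-template: a set of initial states and a set of labeled edges. -/
structure RBTemplate (k : ℕ) (A : Type) (S : Type) where
  I : Set S
  R : Set (EdgeT k A S)

/-- Broadcast totality: every state has an outgoing broadcast edge. -/
def RBTemplate.BTotal {k : ℕ} {A S : Type} (P : RBTemplate k A S) : Prop :=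
  ∀ s : S, ∃ t : S, (s, Sum.inr (), t) ∈ P.R

/-- Each rendezvous letter labels at most one edge. -/
def RBTemplate.UniqLab {k : ℕ} {A S : Type} (P : RBTemplate k A S) : Prop :=
  ∀ (ς : A × Fin k) (s t s' t' : S),
    (s, Sum.inl ς, t) ∈ P.R → (s', Sum.inl ς, t') ∈ P.R → s = s' ∧ t = t'

/-- Synchronization label of a global transition of a system whose processes are
indexed by `ι`: either a broadcast, or a `k`-wise rendezvous on action `a` by the
processes `procs 0, …, procs (k-1)`. -/
inductive Sync (k : ℕ) (A : Type) (ι : Type) where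
  | bcast : Sync k A ι
  | rdz (a : A) (procs : Fin k → ι) : Sync k A ι

/-- `(f, σ, g)` is a global transition of the system with processes indexed by `ι`. -/
def RBTrans {k : ℕ} {A S : Type} (P : RBTemplate k A S) {ι : Type}
    (f : ι → S) (σ : Sync k A ι) (g : ι → S) : Prop :=
  match σ with
  | .bcast => ∀ i, (f i, Sum.inr (), g i) ∈ P.R
  | .rdz a procs =>
      Function.Injective procs ∧
      (∀ j : Fin k, (f (procs j), Sum.inl (a, j), g (procs j)) ∈ P.R) ∧
      (∀ i, (∀ j, procs j ≠ i) → g i = f i)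

/-- Process `i` moves in a transition with synchronization label `σ`. -/
def Sync.Moved {k : ℕ} {A ι : Type} (σ : Sync k A ι) (i : ι) : Prop :=
  match σ with
  | .bcast => True
  | .rdz _ procs => ∃ j, procs j = i

/-- The edge of the template taken by process `i` in the global transition `(f, σ, g)`
(`none` if `i` does not move). -/
noncomputable def edgeAt {k : ℕ} {A S ι : Type} (f g : ι → S) (σ : Sync k A ι) (i : ι) :
    Option (EdgeT k A S) :=
  match σ with
  | .bcast => some (f i, Sum.inr (), g i)
  | .rdz a procs =>
      letI := Classical.propDecidable (∃ j, procs j = i)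
      if h : ∃ j, procs j = i then some (f i, Sum.inl (a, Classical.choose h), g i)
      else none

/-- A finite path of the RB-system with processes indexed by `ι`:
a length, configurations `conf 0, …, conf len`, and transitions between them. -/
structure FinPath {k : ℕ} {A S : Type} (P : RBTemplate k A S) (ι : Type) where
  len : ℕ
  conf : ℕ → ι → S
  sync : ℕ → Sync k A ι
  valid : ∀ t, t < len → RBTrans P (conf t) (sync t) (conf (t + 1))

/-- An infinite path of the RB-system with processes indexed by `ι`. -/
structure InfPath {k : ℕ} {A S : Type} (P : RBTemplate k A S) (ι : Type) where
  conf : ℕ → ι → S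
  sync : ℕ → Sync k A ι
  valid : ∀ t, RBTrans P (conf t) (sync t) (conf (t + 1))

/-- A finite run: a finite path starting at an initial configuration. -/
def FinPath.IsRun {k : ℕ} {A S : Type} {P : RBTemplate k A S} {ι : Type}
    (p : FinPath P ι) : Prop :=
  ∀ i, p.conf 0 i ∈ P.I

/-- An infinite run: an infinite path starting at an initial configuration. -/
def InfPath.IsRun {k : ℕ} {A S : Type} {P : RBTemplate k A S} {ι : Type}
    (p : InfPath P ι) : Prop :=
  ∀ i, p.conf 0 i ∈ P.I

/-- The projection of a finite path onto process `i`: the sequence of edges taken by `i`. -/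
noncomputable def FinPath.proj {k : ℕ} {A S : Type} {P : RBTemplate k A S} {ι : Type}
    (p : FinPath P ι) (i : ι) : List (EdgeT k A S) :=
  (List.range p.len).filterMap (fun t => edgeAt (p.conf t) (p.conf (t + 1)) (p.sync t) i)

/-- The number of broadcast transitions on a finite path. -/
noncomputable def FinPath.bcasts {k : ℕ} {A S : Type} {P : RBTemplate k A S} {ι : Type}
    (p : FinPath P ι) : ℕ :=
  Nat.card {t : ℕ // t < p.len ∧ p.sync t = Sync.bcast}

/-- The set of finite executions of the RB-system induced by `P`: projections onto
process `0` of the finite runs of the systems `P^n`, `n ∈ ℕ`. -/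
def execFin {k : ℕ} {A S : Type} (P : RBTemplate k A S) : Set (List (EdgeT k A S)) :=
  {w | ∃ n : ℕ, ∃ p : FinPath P (Fin (n + 1)), p.IsRun ∧ p.proj 0 = w}

/-- The set of infinite executions of the RB-system induced by `P`: infinite projections
onto process `0` of the runs of the systems `P^n`, `n ∈ ℕ`.  Here `ι` enumerates, in
increasing order, exactly the transitions in which process `0` moves. -/
def execInf {k : ℕ} {A S : Type} (P : RBTemplate k A S) : Set (ℕ → EdgeT k A S) :=
  {w | ∃ n : ℕ, ∃ p : InfPath P (Fin (n + 1)), p.IsRun ∧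
    ∃ ι : ℕ → ℕ, StrictMono ι ∧
      (∀ t, (p.sync t).Moved 0 ↔ ∃ m, ι m = t) ∧
      (∀ m, edgeAt (p.conf (ι m)) (p.conf (ι m + 1)) (p.sync (ι m)) 0 = some (w m))}

/-! ### The reachability-unwinding -/

/-- `X` is closed under the saturation rule for the set `J` of initial states. -/
def SatClosed {k : ℕ} {A S : Type} (P : RBTemplate k A S) (J : Set S) (X : Set S) : Prop :=
  J ⊆ X ∧ ∀ (s : S) (a : A) (_h : Fin k) (t : S), s ∈ X → (s, Sum.inl (a, _h), t) ∈ P.R →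
    (∀ l : Fin k, ∃ s' t' : S, s' ∈ X ∧ (s', Sum.inl (a, l), t') ∈ P.R) → t ∈ X

/-- The saturated state set `S_i` generated from the set `J` of initial states:
the least set containing `J` and closed under the saturation rule. -/
def SatS {k : ℕ} {A S : Type} (P : RBTemplate k A S) (J : Set S) : Set S :=
  ⋂₀ {X | SatClosed P J X}

/-- The saturated edge set `R_i` generated from the set `J` of initial states. -/
def SatR {k : ℕ} {A S : Type} (P : RBTemplate k A S) (J : Set S) : Set (EdgeT k A S) :=
  {e | ∃ (s : S) (a : A) (h : Fin k) (t : S), e = (s, Sum.inl (a, h), t) ∧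
    s ∈ SatS P J ∧ e ∈ P.R ∧
    ∀ l : Fin k, ∃ s' t' : S, s' ∈ SatS P J ∧ (s', Sum.inl (a, l), t') ∈ P.R}

/-- The initial-state sets `I_i` of the components `P_i` of the reachability-unwinding
(each component `P_i = (S_i, I_i, R_i)` is completely determined by `I_i`, via
`S_i = SatS P (compI P i)` and `R_i = SatR P (compI P i)`). -/
def compI {k : ℕ} {A S : Type} (P : RBTemplate k A S) : ℕ → Set S
  | 0 => P.I
  | i + 1 => {s | ∃ h : S, h ∈ SatS P (compI P i) ∧ (h, Sum.inr (), s) ∈ P.R}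

/-- `(n, m)` is the (least) lasso pair of the unwinding construction: the components
`P_0, …, P_m` are pairwise distinct and `P_n = P_{m+1}`.  The prefix length is `n` and
the period is `r = m + 1 - n`. -/
def IsLasso {k : ℕ} {A S : Type} (P : RBTemplate k A S) (n m : ℕ) : Prop :=
  n ≤ m ∧ compI P n = compI P (m + 1) ∧
    ∀ i j : ℕ, i < j → j ≤ m → compI P i ≠ compI P j

/-- The component number associated with `i`, for the lasso pair `(n, m)`. -/
def compAt (n m i : ℕ) : ℕ := if i ≤ m then i else n + (i - n) % (m + 1 - n)

/-- The reachability-unwinding `P^⊸` of `P`, for the lasso pair `(n, m)`: states are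
pairs (state of `P`, component number). -/
def unwind {k : ℕ} {A S : Type} (P : RBTemplate k A S) (n m : ℕ) :
    RBTemplate k A (S × ℕ) where
  I := {x | x.1 ∈ P.I ∧ x.2 = 0}
  R := {e | (∃ (s t : S) (ς : A × Fin k) (i : ℕ), i ≤ m ∧
              e = ((s, i), Sum.inl ς, (t, i)) ∧ (s, Sum.inl ς, t) ∈ SatR P (compI P i)) ∨
            (∃ (s t : S) (i : ℕ), i ≤ m ∧
              e = ((s, i), Sum.inr (), (t, compAt n m (i + 1))) ∧
              s ∈ SatS P (compI P i) ∧ (s, Sum.inr (), t) ∈ P.R)}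

/-- Erasing the component numbers from an edge of the unwinding. -/
def erE {k : ℕ} {A S : Type} (e : EdgeT k A (S × ℕ)) : EdgeT k A S :=
  (e.1.1, e.2.1, e.2.2.1)

/-- The NFA `A_P^fin`: its states are the states of the template `P^⊸`, its initial
states are those of `P^⊸`, every state is accepting, and for every edge `(s, σ, t)`
of `P^⊸` there is a transition from `s` to `t` reading the letter `(s^◦, σ, t^◦)`
(the edge with component numbers erased). -/
def APfin {k : ℕ} {A S : Type} (P : RBTemplate k A S) (n₀ m : ℕ) :
    NFA (EdgeT k A S) (S × ℕ) where
  step := fun q e =>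
    {q' | (q, e.2.1, q') ∈ (unwind P n₀ m).R ∧ e.1 = q.1 ∧ e.2.2 = q'.1}
  start := (unwind P n₀ m).I
  accept := Set.univ

/-! ### Auxiliary development -/

section Aux

variable {k : ℕ} {A S : Type}

/-- basic edgeAt lemmas -/
lemma edgeAt_rdz_eq {ι : Type} (f g : ι → S) (a : A) (procs : Fin k → ι)
    (hinj : Function.Injective procs) (h : Fin k) (x : ι) (hx : procs h = x) :
    edgeAt f g (.rdz a procs) x = some (f x, Sum.inl (a, h), g x) := by
  have hex : ∃ j, procs j = x := ⟨h, hx⟩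
  show (letI := Classical.propDecidable (∃ j, procs j = x);
    if hh : ∃ j, procs j = x then some (f x, Sum.inl (a, Classical.choose hh), g x)
    else none) = _
  rw [dif_pos hex]
  have : Classical.choose hex = h := hinj (by rw [Classical.choose_spec hex, hx])
  rw [this]

lemma edgeAt_rdz_none {ι : Type} (f g : ι → S) (a : A) (procs : Fin k → ι)
    (x : ι) (hx : ∀ j, procs j ≠ x) :
    edgeAt f g (.rdz a procs) x = none := by
  show (letI := Classical.propDecidable (∃ j, procs j = x);
    if hh : ∃ j, procs j = x then some (f x, Sum.inl (a, Classical.choose hh), g x)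
    else none) = none
  rw [dif_neg (by push_neg; exact hx)]

lemma edgeAt_comp {ι ι' : Type} (u : ι → ι') (hu : Function.Injective u)
    (F G : ι' → S) (a : A) (procs : Fin k → ι) (hinj : Function.Injective procs) (i : ι) :
    edgeAt F G (.rdz a (u ∘ procs)) (u i) = edgeAt (F ∘ u) (G ∘ u) (.rdz a procs) i := by
  by_cases hex : ∃ j, procs j = i
  · obtain ⟨j, hj⟩ := hex
    rw [edgeAt_rdz_eq F G a (u ∘ procs) (hu.comp hinj) j (u i) (by simp [Function.comp, hj]),
      edgeAt_rdz_eq (F ∘ u) (G ∘ u) a procs hinj j i hj]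
    rfl
  · push_neg at hex
    rw [edgeAt_rdz_none F G a (u ∘ procs) (u i) (fun j hj => hex j (hu hj)),
      edgeAt_rdz_none _ _ a procs i hex]

variable (P : RBTemplate k A S)

/-- Runs of the RB-system, presented inductively, with the number of broadcasts and
the trace of every process recorded. -/
inductive ReachT : {ι : Type} → ℕ → (ι → S) → (ι → List (EdgeT k A S)) → Prop
  | init {ι : Type} (f : ι → S) (h : ∀ i, f i ∈ P.I) : ReachT 0 f (fun _ => [])
  | rdz {ι : Type} {j : ℕ} {f : ι → S} {tr : ι → List (EdgeT k A S)} (a : A)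
      (procs : Fin k → ι) {g : ι → S} (hr : ReachT j f tr)
      (ht : RBTrans P f (.rdz a procs) g) :
      ReachT j g (fun i => tr i ++ (edgeAt f g (.rdz a procs) i).toList)
  | bcast {ι : Type} {j : ℕ} {f : ι → S} {tr : ι → List (EdgeT k A S)} {g : ι → S}
      (hr : ReachT j f tr) (ht : RBTrans P f .bcast g) :
      ReachT (j+1) g (fun i => tr i ++ [(f i, Sum.inr (), g i)])

/-- Rendezvous-only reachability with traces. -/
inductive RdzStarT : {ι : Type} → (ι → S) → (ι → List (EdgeT k A S)) →
    (ι → S) → (ι → List (EdgeT k A S)) → Prop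
  | refl {ι : Type} (f : ι → S) (tr : ι → List (EdgeT k A S)) : RdzStarT f tr f tr
  | tail {ι : Type} {f : ι → S} {tr : ι → List (EdgeT k A S)} {f₁ : ι → S}
      {tr₁ : ι → List (EdgeT k A S)} (a : A) (procs : Fin k → ι) {g : ι → S}
      (h : RdzStarT f tr f₁ tr₁) (ht : RBTrans P f₁ (.rdz a procs) g) :
      RdzStarT f tr g (fun i => tr₁ i ++ (edgeAt f₁ g (.rdz a procs) i).toList)

lemma ReachT.of_rdzStarT {ι : Type} {j : ℕ} {f : ι → S} {tr f' tr'}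
    (h : ReachT P j f tr) (hs : RdzStarT P f tr f' tr') : ReachT P j f' tr' := by
  induction hs with
  | refl => exact h
  | tail a procs h' ht ih => exact .rdz a procs ih ht

end Aux
section Aux2

variable {k : ℕ} {A S : Type} {P : RBTemplate k A S}

lemma rbtrans_liftL {ι₁ ι₂ : Type} {f f' : ι₁ → S} {a : A} {procs : Fin k → ι₁}
    (h : RBTrans P f (.rdz a procs) f') (g : ι₂ → S) :
    RBTrans P (Sum.elim f g) (.rdz a (Sum.inl ∘ procs)) (Sum.elim f' g) := by
  obtain ⟨hinj, hed, hfr⟩ := h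
  refine ⟨Sum.inl_injective.comp hinj, fun j => hed j, fun x hx => ?_⟩
  cases x with
  | inl i => exact hfr i (fun j hj => hx j (by simp [hj]))
  | inr y => rfl

lemma rbtrans_liftR {ι₁ ι₂ : Type} {g g' : ι₂ → S} {a : A} {procs : Fin k → ι₂}
    (h : RBTrans P g (.rdz a procs) g') (f : ι₁ → S) :
    RBTrans P (Sum.elim f g) (.rdz a (Sum.inr ∘ procs)) (Sum.elim f g') := by
  obtain ⟨hinj, hed, hfr⟩ := h
  refine ⟨Sum.inr_injective.comp hinj, fun j => hed j, fun x hx => ?_⟩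
  cases x with
  | inl i => rfl
  | inr y => exact hfr y (fun j hj => hx j (by simp [hj]))

lemma trace_liftL {ι₁ ι₂ : Type} (f₁ g₁ : ι₁ → S) (g : ι₂ → S)
    (tr₁ : ι₁ → List (EdgeT k A S)) (sr : ι₂ → List (EdgeT k A S)) (a : A)
    (procs : Fin k → ι₁) (hinj : Function.Injective procs) :
    (fun x => Sum.elim tr₁ sr x ++
      (edgeAt (Sum.elim f₁ g) (Sum.elim g₁ g) (.rdz a (Sum.inl ∘ procs)) x).toList)
    = Sum.elim (fun i => tr₁ i ++ (edgeAt f₁ g₁ (.rdz a procs) i).toList) sr := by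
  funext x
  cases x with
  | inl i =>
    have := edgeAt_comp (Sum.inl : ι₁ → ι₁ ⊕ ι₂) Sum.inl_injective
      (Sum.elim f₁ g) (Sum.elim g₁ g) a procs hinj i
    simp only [Sum.elim_inl]
    rw [this]; rfl
  | inr y =>
    simp only [Sum.elim_inr]
    rw [edgeAt_rdz_none _ _ a _ (Sum.inr y) (fun j => by simp [Function.comp])]
    simp

lemma trace_liftR {ι₁ ι₂ : Type} (f₁ g₁ : ι₂ → S) (f : ι₁ → S)
    (tr₁ : ι₂ → List (EdgeT k A S)) (sr : ι₁ → List (EdgeT k A S)) (a : A)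
    (procs : Fin k → ι₂) (hinj : Function.Injective procs) :
    (fun x => Sum.elim sr tr₁ x ++
      (edgeAt (Sum.elim f f₁) (Sum.elim f g₁) (.rdz a (Sum.inr ∘ procs)) x).toList)
    = Sum.elim sr (fun i => tr₁ i ++ (edgeAt f₁ g₁ (.rdz a procs) i).toList) := by
  funext x
  cases x with
  | inr i =>
    have := edgeAt_comp (Sum.inr : ι₂ → ι₁ ⊕ ι₂) Sum.inr_injective
      (Sum.elim f f₁) (Sum.elim f g₁) a procs hinj i
    simp only [Sum.elim_inr]
    rw [this]; rfl
  | inl y =>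
    simp only [Sum.elim_inl]
    rw [edgeAt_rdz_none _ _ a _ (Sum.inl y) (fun j => by simp [Function.comp])]
    simp

lemma rdzStarT_liftL {ι₁ ι₂ : Type} {f : ι₁ → S} {tr f' tr'}
    (h : RdzStarT P f tr f' tr') (g : ι₂ → S) (sr : ι₂ → List (EdgeT k A S)) :
    RdzStarT P (Sum.elim f g) (Sum.elim tr sr) (Sum.elim f' g) (Sum.elim tr' sr) := by
  induction h with
  | refl => exact .refl _ _
  | tail a procs h' ht ih =>
    rw [← trace_liftL _ _ g _ sr a procs ht.1]
    exact .tail a (Sum.inl ∘ procs) ih (rbtrans_liftL ht g)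

lemma reachT_zero_aux {ι₁ ι₂ : Type} {j : ℕ} {f : ι₁ → S} {tr}
    (h : ReachT P j f tr) (hj : j = 0) (g : ι₂ → S) (hg : ∀ i, g i ∈ P.I) :
    ReachT P 0 (Sum.elim f g) (Sum.elim tr (fun _ => [])) := by
  induction h with
  | init f h =>
    have : (Sum.elim (fun _ : ι₁ => ([] : List (EdgeT k A S))) (fun _ : ι₂ => []))
        = (fun _ => []) := by funext x; cases x <;> rfl
    rw [this]
    exact .init _ (fun i => by cases i with | inl i => exact h i | inr i => exact hg i)
  | rdz a procs hr ht ih =>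
    rw [← trace_liftL _ _ g _ (fun _ => []) a procs ht.1]
    exact .rdz a (Sum.inl ∘ procs) (ih hj) (rbtrans_liftL ht g)
  | bcast hr ht ih => omega

lemma reachT_succ_decomp {ι : Type} {J : ℕ} {f : ι → S} {tr}
    (h : ReachT P J f tr) : ∀ j, J = j + 1 →
    ∃ (f₁ : ι → S) (tr₁ : ι → List (EdgeT k A S)) (f₂ : ι → S),
      ReachT P j f₁ tr₁ ∧ RBTrans P f₁ .bcast f₂ ∧
      RdzStarT P f₂ (fun i => tr₁ i ++ [(f₁ i, Sum.inr (), f₂ i)]) f tr := by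
  induction h with
  | init f h => intro j hj; omega
  | rdz a procs hr ht ih =>
    intro j hj
    obtain ⟨f₁, tr₁, f₂, h₁, h₂, h₃⟩ := ih j hj
    exact ⟨f₁, tr₁, f₂, h₁, h₂, .tail a procs h₃ ht⟩
  | @bcast j' f' tr' g hr ht ih =>
    intro j hj
    have hj' : j' = j := by omega
    subst hj'
    exact ⟨f', tr', g, hr, ht, .refl _ _⟩

lemma reachT_combine {ι₁ ι₂ : Type} : ∀ {j : ℕ} {g : ι₂ → S} {tr'},
    ReachT P j g tr' → ∀ {f : ι₁ → S} {tr}, ReachT P j f tr →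
    ReachT P j (Sum.elim f g) (Sum.elim tr tr') := by
  intro j g tr' h
  induction h with
  | init g hg => intro f tr hf; exact reachT_zero_aux hf rfl g hg
  | @rdz j₀ g₀ tr₀ a procs g hr ht ih =>
    intro f tr hf
    rw [← trace_liftR _ _ f _ tr a procs ht.1]
    exact .rdz a (Sum.inr ∘ procs) (ih hf) (rbtrans_liftR ht f)
  | @bcast j₀ g₀ tr₀ g hr ht ih =>
    intro f tr hf
    obtain ⟨f₁, tr₁, f₂, h₁, h₂, h₃⟩ := reachT_succ_decomp hf j₀ rfl
    have hb : RBTrans P (Sum.elim f₁ g₀) .bcast (Sum.elim f₂ g) := by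
      intro x; cases x with
      | inl i => exact h₂ i
      | inr y => exact ht y
    have step : ReachT P (j₀ + 1) (Sum.elim f₂ g)
        (fun x => Sum.elim tr₁ tr₀ x ++ [(Sum.elim f₁ g₀ x, Sum.inr (), Sum.elim f₂ g x)]) :=
      .bcast (ih h₁) hb
    have heq : (fun x => Sum.elim tr₁ tr₀ x ++ [(Sum.elim f₁ g₀ x, Sum.inr (), Sum.elim f₂ g x)])
        = Sum.elim (fun i => tr₁ i ++ [(f₁ i, Sum.inr (), f₂ i)])
            (fun i => tr₀ i ++ [(g₀ i, Sum.inr (), g i)]) := by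
      funext x; cases x <;> rfl
    rw [heq] at step
    exact ReachT.of_rdzStarT P step (rdzStarT_liftL h₃ g (fun i => tr₀ i ++ [(g₀ i, Sum.inr (), g i)]))

end Aux2
section Aux3

variable {k : ℕ} {A S : Type} {P : RBTemplate k A S}

lemma funext_empty {α : Type} (f g : Empty → α) : f = g := funext fun x => x.elim

lemma reachT_empty (j : ℕ) :
    ReachT P (ι := Empty) j (fun x => x.elim) (fun x => x.elim) := by
  induction j with
  | zero =>
    have h := ReachT.init (P := P) (fun x : Empty => (x.elim : S)) (fun i => i.elim)
    rwa [funext_empty (fun _ => []) (fun x : Empty => x.elim)] at h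
  | succ j ih =>
    have h := ReachT.bcast (g := fun x : Empty => (x.elim : S)) ih (fun i => i.elim)
    rwa [funext_empty (fun i : Empty => i.elim ++ [(i.elim, Sum.inr (), i.elim)])
      (fun x : Empty => x.elim)] at h

lemma reachT_family (j : ℕ) : ∀ (c : ℕ) (v : Fin c → S),
    (∀ l, ∃ (ι : Type) (_ : Fintype ι) (i₀ : ι) (f : ι → S)
      (tr : ι → List (EdgeT k A S)), ReachT P j f tr ∧ f i₀ = v l) →
    ∃ (ι : Type) (_ : Fintype ι) (pr : Fin c → ι) (f : ι → S)
      (tr : ι → List (EdgeT k A S)),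
      Function.Injective pr ∧ ReachT P j f tr ∧ ∀ l, f (pr l) = v l := by
  intro c
  induction c with
  | zero =>
    intro v _
    exact ⟨Empty, inferInstance, Fin.elim0, _, _, fun x => x.elim0,
      reachT_empty j, fun l => l.elim0⟩
  | succ c ih =>
    intro v hv
    obtain ⟨ι₁, ft₁, i₀, f₁, tr₁, h₁, e₁⟩ := hv 0
    obtain ⟨ι₂, ft₂, pr₂, f₂, tr₂, inj₂, h₂, e₂⟩ := ih (fun l => v l.succ)
      (fun l => hv l.succ)
    refine ⟨ι₁ ⊕ ι₂, inferInstance,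
      fun l => Fin.cases (Sum.inl i₀) (fun l' => Sum.inr (pr₂ l')) l,
      Sum.elim f₁ f₂, Sum.elim tr₁ tr₂, ?_, reachT_combine h₂ h₁, ?_⟩
    · intro x y hxy
      induction x using Fin.cases with
      | zero =>
        induction y using Fin.cases with
        | zero => rfl
        | succ y' => simp at hxy
      | succ x' =>
        induction y using Fin.cases with
        | zero => simp at hxy
        | succ y' =>
          simp only [Fin.cases_succ] at hxy
          exact congrArg Fin.succ (inj₂ (Sum.inr_injective hxy))
    · intro l
      induction l using Fin.cases with
      | zero => simpa using e₁
      | succ l' => simpa using e₂ l'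

/-- one broadcast step, moving a distinguished process along a given edge -/
lemma reachT_bcast_step {ι : Type} {j : ℕ} {f : ι → S} {tr}
    (hTot : P.BTotal) (h : ReachT P j f tr) (i₀ : ι) {s t : S}
    (hi : f i₀ = s) (he : (s, Sum.inr (), t) ∈ P.R) :
    ∃ g : ι → S, ReachT P (j+1) g (fun i => tr i ++ [(f i, Sum.inr (), g i)]) ∧ g i₀ = t := by
  haveI := Classical.decEq ι
  refine ⟨fun i => if i = i₀ then t else Classical.choose (hTot (f i)),
    .bcast h ?_, if_pos rfl⟩
  intro i
  by_cases hii : i = i₀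
  · subst hii; simp only [if_pos rfl]; rw [hi]; exact he
  · simp only [if_neg hii]; exact Classical.choose_spec (hTot (f i))

/-- one rendezvous step of a distinguished process, with partners supplied by
separately reachable runs -/
lemma reachT_rdz_step {ι : Type} [Fintype ι] {j : ℕ} {f : ι → S} {tr}
    (h : ReachT P j f tr) (i₀ : ι) {s t : S} {a : A} {hh : Fin k}
    (hi : f i₀ = s) (he : (s, Sum.inl (a, hh), t) ∈ P.R)
    (hpart : ∀ l : Fin k, ∃ s' t' : S,
      (∃ (ι₂ : Type) (_ : Fintype ι₂) (x : ι₂) (f₂ : ι₂ → S)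
        (tr₂ : ι₂ → List (EdgeT k A S)), ReachT P j f₂ tr₂ ∧ f₂ x = s') ∧
      (s', Sum.inl (a, l), t') ∈ P.R) :
    ∃ (ι' : Type) (_ : Fintype ι') (i₀' : ι') (f' : ι' → S)
      (tr' : ι' → List (EdgeT k A S)), ReachT P j f' tr' ∧ f' i₀' = t ∧
      tr' i₀' = tr i₀ ++ [(s, Sum.inl (a, hh), t)] := by
  classical
  choose s' t' hreal hedge using hpart
  obtain ⟨ι₂, ft₂, pr, F, TR, injpr, hF, hFv⟩ := reachT_family j k s' hreal
  have comb : ReachT P j (Sum.elim f F) (Sum.elim tr TR) := reachT_combine hF h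
  let procs : Fin k → ι ⊕ ι₂ := fun l => if l = hh then Sum.inl i₀ else Sum.inr (pr l)
  let g : ι ⊕ ι₂ → S := Sum.elim (fun i => if i = i₀ then t else f i)
    (fun y => if hy : ∃ l, pr l = y ∧ l ≠ hh then t' (Classical.choose hy) else F y)
  have hp_hh : procs hh = Sum.inl i₀ := if_pos rfl
  have hp_ne : ∀ l, l ≠ hh → procs l = Sum.inr (pr l) := fun l hl => if_neg hl
  have hgl : ∀ i : ι, g (Sum.inl i) = if i = i₀ then t else f i := fun i => rfl
  have hgr_pr : ∀ l, l ≠ hh → g (Sum.inr (pr l)) = t' l := by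
    intro l hl
    have hy : ∃ l', pr l' = pr l ∧ l' ≠ hh := ⟨l, rfl, hl⟩
    show (if hy' : ∃ l', pr l' = pr l ∧ l' ≠ hh then t' (Classical.choose hy')
      else F (pr l)) = t' l
    rw [dif_pos hy]
    obtain ⟨hc1, hc2⟩ := Classical.choose_spec hy
    rw [injpr hc1]
  have hgr_no : ∀ y, (∀ l, l ≠ hh → pr l ≠ y) → g (Sum.inr y) = F y := by
    intro y hy
    show (if hy' : ∃ l', pr l' = y ∧ l' ≠ hh then t' (Classical.choose hy') else F y) = F y
    rw [dif_neg]
    rintro ⟨l, hl1, hl2⟩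
    exact hy l hl2 hl1
  have hinj : Function.Injective procs := by
    intro l₁ l₂ hl
    by_cases h1 : l₁ = hh <;> by_cases h2 : l₂ = hh
    · rw [h1, h2]
    · rw [h1, hp_hh, hp_ne l₂ h2] at hl; exact absurd hl (by simp)
    · rw [h2, hp_hh, hp_ne l₁ h1] at hl; exact absurd hl (by simp)
    · rw [hp_ne l₁ h1, hp_ne l₂ h2] at hl
      exact injpr (Sum.inr_injective hl)
  have htrans : RBTrans P (Sum.elim f F) (.rdz a procs) g := by
    refine ⟨hinj, ?_, ?_⟩
    · intro l
      by_cases hl : l = hh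
      · subst hl
        rw [hp_hh, hgl]
        simp only [if_pos rfl, Sum.elim_inl]
        rw [hi]; exact he
      · rw [hp_ne l hl, hgr_pr l hl]
        simp only [Sum.elim_inr]
        rw [hFv l]; exact hedge l
    · intro x hx
      cases x with
      | inl i =>
        have hne : i ≠ i₀ := by
          intro hcon; exact hx hh (by rw [hp_hh, hcon])
        rw [hgl, if_neg hne]; rfl
      | inr y =>
        refine (hgr_no y ?_).trans rfl
        intro l hl hcon
        exact hx l (by rw [hp_ne l hl, hcon])
  refine ⟨ι ⊕ ι₂, inferInstance, Sum.inl i₀, g, _, .rdz a procs comb htrans, ?_, ?_⟩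
  · rw [hgl, if_pos rfl]
  · show Sum.elim tr TR (Sum.inl i₀) ++
      (edgeAt (Sum.elim f F) g (.rdz a procs) (Sum.inl i₀)).toList = _
    rw [edgeAt_rdz_eq _ _ a procs hinj hh (Sum.inl i₀) hp_hh]
    simp only [Sum.elim_inl]
    rw [hgl, if_pos rfl, hi]
    rfl

/-- the key "any saturated state is simultaneously reachable" predicate -/
def Real0 (P : RBTemplate k A S) (j : ℕ) (s : S) : Prop :=
  ∃ (ι : Type) (_ : Fintype ι) (i₀ : ι) (f : ι → S)
    (tr : ι → List (EdgeT k A S)), ReachT P j f tr ∧ f i₀ = s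

lemma real0_closure (j : ℕ) (s : S) (a : A) (hh : Fin k) (t : S)
    (hs : Real0 P j s) (he : (s, Sum.inl (a, hh), t) ∈ P.R)
    (hp : ∀ l, ∃ s' t', Real0 P j s' ∧ (s', Sum.inl (a, l), t') ∈ P.R) :
    Real0 P j t := by
  obtain ⟨ι, ft, i₀, f, tr, hr, hf⟩ := hs
  obtain ⟨ι', ft', i₀', f', tr', hr', hf', -⟩ := reachT_rdz_step hr i₀ hf he hp
  exact ⟨ι', ft', i₀', f', tr', hr', hf'⟩

lemma satS_subset_of_closed {J X : Set S} (h : SatClosed P J X) : SatS P J ⊆ X :=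
  Set.sInter_subset_of_mem h

lemma mem_satS_of_mem {J : Set S} {s : S} (hs : s ∈ J) : s ∈ SatS P J :=
  fun _ hX => hX.1 hs

lemma satS_closed (J : Set S) : SatClosed P J (SatS P J) := by
  constructor
  · intro s hs; exact mem_satS_of_mem hs
  · intro s a hh t hs hedge hpart X hX
    exact hX.2 s a hh t (hs X hX) hedge
      (fun l => by
        obtain ⟨s', t', h1, h2⟩ := hpart l
        exact ⟨s', t', h1 X hX, h2⟩)

lemma flood (hTot : P.BTotal) : ∀ j s, s ∈ SatS P (compI P j) → Real0 P j s := by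
  intro j
  induction j with
  | zero =>
    intro s hs
    refine satS_subset_of_closed (X := {s | Real0 P 0 s}) ⟨?_, ?_⟩ hs
    · intro u hu
      exact ⟨PUnit, inferInstance, ⟨⟩, fun _ => u, _, .init _ (fun _ => hu), rfl⟩
    · intro u a hh t hu hedge hpart
      exact real0_closure 0 u a hh t hu hedge hpart
  | succ j ih =>
    intro s hs
    refine satS_subset_of_closed (X := {s | Real0 P (j+1) s}) ⟨?_, ?_⟩ hs
    · rintro u ⟨hp, hpSat, hedge⟩
      obtain ⟨ι, ft, i₀, f, tr, hr, hf⟩ := ih hp hpSat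
      obtain ⟨g, hg, hgi⟩ := reachT_bcast_step hTot hr i₀ hf hedge
      exact ⟨ι, ft, i₀, g, _, hg, hgi⟩
    · intro u a hh t hu hedge hpart
      exact real0_closure (j+1) u a hh t hu hedge hpart

end Aux3
section Aux4

variable {k : ℕ} {A S : Type} {P : RBTemplate k A S}

/-! #### periodicity of `compI` -/

lemma compI_step_congr {i i' : ℕ} (h : compI P i = compI P i') :
    compI P (i + 1) = compI P (i' + 1) := by
  show {s | ∃ h : S, h ∈ SatS P (compI P i) ∧ (h, Sum.inr (), s) ∈ P.R} = _
  rw [h]; rfl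

lemma compI_add {n₀ m : ℕ} (hL : compI P n₀ = compI P (m + 1)) (d : ℕ) :
    compI P (n₀ + d) = compI P (m + 1 + d) := by
  induction d with
  | zero => simpa using hL
  | succ d ih => exact compI_step_congr ih

lemma compI_period {n₀ m : ℕ} (hnm : n₀ ≤ m) (hL : compI P n₀ = compI P (m + 1)) :
    ∀ (q rem : ℕ), compI P (n₀ + rem + q * (m + 1 - n₀)) = compI P (n₀ + rem) := by
  intro q rem
  induction q with
  | zero => simp
  | succ q ih =>
    have h1 : compI P (n₀ + (rem + q * (m + 1 - n₀))) =
        compI P (m + 1 + (rem + q * (m + 1 - n₀))) := compI_add hL _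
    have h2 : m + 1 + (rem + q * (m + 1 - n₀)) = n₀ + rem + (q + 1) * (m + 1 - n₀) := by
      have : n₀ + (m + 1 - n₀) = m + 1 := by omega
      ring_nf; omega
    rw [← h2]
    rw [show n₀ + rem + q * (m+1-n₀) = n₀ + (rem + q * (m+1-n₀)) by ring] at ih
    rw [← h1, ih]

lemma compI_compAt {n₀ m : ℕ} (hL : IsLasso P n₀ m) (b : ℕ) :
    compI P (compAt n₀ m b) = compI P b := by
  obtain ⟨hnm, hper, -⟩ := hL
  unfold compAt
  by_cases hb : b ≤ m
  · rw [if_pos hb]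
  · rw [if_neg hb]
    have hr : 0 < m + 1 - n₀ := by omega
    have hd := Nat.div_add_mod' (b - n₀) (m + 1 - n₀)
    have hb' : b = n₀ + (b - n₀) % (m + 1 - n₀) + ((b - n₀) / (m + 1 - n₀)) * (m + 1 - n₀) := by
      omega
    rw [show compI P b = compI P (n₀ + (b - n₀) % (m + 1 - n₀) +
      ((b - n₀) / (m + 1 - n₀)) * (m + 1 - n₀)) from by rw [← hb']]
    rw [compI_period hnm hper]

lemma compAt_le {n₀ m : ℕ} (hnm : n₀ ≤ m) (b : ℕ) : compAt n₀ m b ≤ m := by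
  unfold compAt
  by_cases hb : b ≤ m
  · rwa [if_pos hb]
  · rw [if_neg hb]
    have : (b - n₀) % (m + 1 - n₀) < m + 1 - n₀ := Nat.mod_lt _ (by omega)
    omega

lemma compAt_zero {n₀ m : ℕ} : compAt n₀ m 0 = 0 := by
  unfold compAt; rw [if_pos (Nat.zero_le m)]

lemma compAt_succ {n₀ m : ℕ} (hnm : n₀ ≤ m) (b : ℕ) :
    compAt n₀ m (compAt n₀ m b + 1) = compAt n₀ m (b + 1) := by
  have key : ∀ x r : ℕ, (x + 1) % r = (x % r + 1) % r := by
    intro x r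
    exact ((Nat.mod_modEq x r).symm.add_right 1)
  by_cases hb : b ≤ m
  · rw [show compAt n₀ m b = b from if_pos hb]
  · have hr : 0 < m + 1 - n₀ := by omega
    have hmod : (b - n₀) % (m + 1 - n₀) < m + 1 - n₀ := Nat.mod_lt _ hr
    have hc : compAt n₀ m b = n₀ + (b - n₀) % (m + 1 - n₀) := if_neg hb
    have hb1 : ¬ (b + 1 ≤ m) := by omega
    have hcb1 : compAt n₀ m (b + 1) = n₀ + (b + 1 - n₀) % (m + 1 - n₀) := if_neg hb1
    have hx : b + 1 - n₀ = (b - n₀) + 1 := by omega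
    by_cases hcm : compAt n₀ m b + 1 ≤ m
    · have h1 : compAt n₀ m (compAt n₀ m b + 1) = compAt n₀ m b + 1 := if_pos hcm
      rw [h1, hcb1, hc, hx, key]
      have hlt : (b - n₀) % (m + 1 - n₀) + 1 < m + 1 - n₀ := by omega
      rw [Nat.mod_eq_of_lt hlt]
      omega
    · -- compAt b = m, wrap-around
      have hcm' : compAt n₀ m b = m := by have := compAt_le hnm b; omega
      have hmm : (b - n₀) % (m + 1 - n₀) = m - n₀ := by omega
      have h1 : compAt n₀ m (compAt n₀ m b + 1) = n₀ + (m + 1 - n₀) % (m + 1 - n₀) := by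
        rw [hcm']
        have : ¬ (m + 1 ≤ m) := by omega
        rw [show compAt n₀ m (m + 1) = n₀ + (m + 1 - n₀) % (m + 1 - n₀) from if_neg this]
      rw [h1, Nat.mod_self, hcb1, hx, key, hmm]
      rw [show m - n₀ + 1 = m + 1 - n₀ from by omega, Nat.mod_self]

/-! #### from `ReachT` to `FinPath` -/

lemma finpath_snoc {ι : Type} (p : FinPath P ι) (σ : Sync k A ι) (g : ι → S)
    (hv : RBTrans P (p.conf p.len) σ g) :
    ∃ q : FinPath P ι, q.conf 0 = p.conf 0 ∧ q.conf q.len = g ∧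
      ∀ i, q.proj i = p.proj i ++ (edgeAt (p.conf p.len) g σ i).toList := by
  classical
  refine ⟨⟨p.len + 1, fun t => if t ≤ p.len then p.conf t else g,
    fun t => if t = p.len then σ else p.sync t, ?_⟩, ?_, ?_, ?_⟩
  · intro t ht
    rcases Nat.lt_or_ge t p.len with h1 | h1
    · have e1 : (if t ≤ p.len then p.conf t else g) = p.conf t := if_pos (by omega)
      have e2 : (if t + 1 ≤ p.len then p.conf (t+1) else g) = p.conf (t+1) := if_pos (by omega)
      have e3 : (if t = p.len then σ else p.sync t) = p.sync t := if_neg (by omega)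
      simp only [e1, e2, e3]
      exact p.valid t h1
    · have ht' : t = p.len := by omega
      subst ht'
      have e1 : (if p.len ≤ p.len then p.conf p.len else g) = p.conf p.len := if_pos le_rfl
      have e2 : (if p.len + 1 ≤ p.len then p.conf (p.len+1) else g) = g := if_neg (by omega)
      have e3 : (if p.len = p.len then σ else p.sync p.len) = σ := if_pos rfl
      simp only [e1, e2, e3]
      exact hv
  · simp
  · show (if p.len + 1 ≤ p.len then p.conf (p.len + 1) else g) = g
    rw [if_neg (by omega)]
  · intro i
    show (List.range (p.len + 1)).filterMap _ = _
    rw [List.range_succ, List.filterMap_append]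
    congr 1
    · apply List.filterMap_congr
      intro t htl
      have htlt : t < p.len := List.mem_range.mp htl
      have e1 : (if t ≤ p.len then p.conf t else g) = p.conf t := if_pos (by omega)
      have e2 : (if t + 1 ≤ p.len then p.conf (t+1) else g) = p.conf (t+1) := if_pos (by omega)
      have e3 : (if t = p.len then σ else p.sync t) = p.sync t := if_neg (by omega)
      simp only [e1, e2, e3]
    · have e1 : (if p.len ≤ p.len then p.conf p.len else g) = p.conf p.len := if_pos le_rfl
      have e2 : (if p.len + 1 ≤ p.len then p.conf (p.len+1) else g) = g := if_neg (by omega)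
      have e3 : (if p.len = p.len then σ else p.sync p.len) = σ := if_pos rfl
      simp only [List.filterMap_cons, List.filterMap_nil, e1, e2, e3]
      cases hopt : edgeAt (p.conf p.len) g σ i <;> simp [hopt]
  
lemma reachT_toPath {ι : Type} {j : ℕ} {f : ι → S} {tr}
    (h : ReachT P j f tr) :
    ∃ p : FinPath P ι, p.IsRun ∧ p.conf p.len = f ∧ ∀ i, p.proj i = tr i := by
  induction h with
  | init f hf =>
    refine ⟨⟨0, fun _ => f, fun _ => .bcast, fun t ht => absurd ht (Nat.not_lt_zero t)⟩,
      hf, rfl, fun i => rfl⟩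
  | rdz a procs hr ht ih =>
    obtain ⟨p, hrun, hlast, hproj⟩ := ih
    obtain ⟨q, hq0, hqlast, hqproj⟩ := finpath_snoc p (.rdz a procs) _ (hlast ▸ ht)
    refine ⟨q, ?_, hqlast, fun i => ?_⟩
    · intro i; rw [hq0]; exact hrun i
    · rw [hqproj i, hproj i, hlast]
  | bcast hr ht ih =>
    obtain ⟨p, hrun, hlast, hproj⟩ := ih
    obtain ⟨q, hq0, hqlast, hqproj⟩ := finpath_snoc p .bcast _ (hlast ▸ ht)
    refine ⟨q, ?_, hqlast, fun i => ?_⟩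
    · intro i; rw [hq0]; exact hrun i
    · rw [hqproj i, hproj i, hlast]
      rfl

lemma finpath_relabel {ι ι' : Type} (e : ι' ≃ ι) (p : FinPath P ι) :
    ∃ q : FinPath P ι', (p.IsRun → q.IsRun) ∧ ∀ i, q.proj i = p.proj (e i) := by
  refine ⟨⟨p.len, fun t => p.conf t ∘ e,
    fun t => match p.sync t with
      | .bcast => .bcast
      | .rdz a procs => .rdz a (e.symm ∘ procs), ?_⟩, ?_, ?_⟩
  · intro t ht
    have hv := p.valid t ht
    rcases hs : p.sync t with _ | ⟨a, procs⟩
    · rw [hs] at hv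
      simp only [hs]
      exact fun i => hv (e i)
    · rw [hs] at hv
      simp only [hs]
      obtain ⟨hinj, hed, hfr⟩ := hv
      refine ⟨(Equiv.injective e.symm).comp hinj, fun jj => ?_, fun i hx => ?_⟩
      · show (p.conf t (e (e.symm (procs jj))), _, p.conf (t+1) (e (e.symm (procs jj)))) ∈ P.R
        rw [e.apply_symm_apply]
        exact hed jj
      · show p.conf (t+1) (e i) = p.conf t (e i)
        refine hfr (e i) (fun jj hjj => hx jj ?_)
        show e.symm (procs jj) = i
        rw [hjj, e.symm_apply_apply]
  · intro hr i; exact hr (e i)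
  · intro i
    apply List.filterMap_congr
    intro t htl
    have htlt : t < p.len := List.mem_range.mp htl
    have hv := p.valid t htlt
    rcases hs : p.sync t with _ | ⟨a, procs⟩
    · simp only [hs]; rfl
    · simp only [hs]
      rw [hs] at hv
      have hinj' : Function.Injective (e.symm ∘ procs) := (Equiv.injective e.symm).comp hv.1
      have := edgeAt_comp (⇑e) (Equiv.injective e) (p.conf t) (p.conf (t+1)) a
        (e.symm ∘ procs) hinj' i
      have hpe : ⇑e ∘ (⇑e.symm ∘ procs) = procs := by
        funext jj; simp
      rw [hpe] at this
      exact this.symm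

lemma real_to_execFin {j : ℕ} {w : List (EdgeT k A S)}
    (h : ∃ (ι : Type) (_ : Fintype ι) (i₀ : ι) (f : ι → S)
      (tr : ι → List (EdgeT k A S)), ReachT P j f tr ∧ tr i₀ = w) :
    w ∈ execFin P := by
  obtain ⟨ι, ft, i₀, f, tr, hr, htr⟩ := h
  obtain ⟨p, hrun, -, hproj⟩ := reachT_toPath hr
  have hpos : 0 < Fintype.card ι := Fintype.card_pos_iff.mpr ⟨i₀⟩
  set n := Fintype.card ι - 1 with hn
  have hcard : Fintype.card ι = n + 1 := by omega
  let e0 : Fin (n + 1) ≃ ι := (finCongr hcard.symm).trans (Fintype.equivFin ι).symm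
  let e : Fin (n + 1) ≃ ι := (Equiv.swap (0 : Fin (n + 1)) (e0.symm i₀)).trans e0
  have he0 : e 0 = i₀ := by
    show e0 (Equiv.swap (0 : Fin (n + 1)) (e0.symm i₀) 0) = i₀
    rw [Equiv.swap_apply_left, Equiv.apply_symm_apply]
  obtain ⟨q, hqrun, hqproj⟩ := finpath_relabel e p
  exact ⟨n, q, hqrun hrun, by rw [hqproj 0, he0, hproj i₀, htr]⟩

end Aux4
section Aux5

variable {k : ℕ} {A S : Type} {P : RBTemplate k A S}

open Classical in
/-- number of broadcasts before time `t` -/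
noncomputable def numB {ι : Type} (p : FinPath P ι) : ℕ → ℕ
  | 0 => 0
  | t + 1 => numB p t + if p.sync t = Sync.bcast then 1 else 0

lemma numB_succ_bcast {ι : Type} (p : FinPath P ι) {t : ℕ} (h : p.sync t = .bcast) :
    numB p (t + 1) = numB p t + 1 := by simp [numB, h]

lemma numB_succ_rdz {ι : Type} (p : FinPath P ι) {t : ℕ} {a procs}
    (h : p.sync t = .rdz a procs) : numB p (t + 1) = numB p t := by simp [numB, h]

/-- run invariant: every process stays in the saturated state sets -/
lemma run_inv {ι : Type} (p : FinPath P ι) (hrun : p.IsRun) :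
    ∀ t, t ≤ p.len → ∀ i, p.conf t i ∈ SatS P (compI P (numB p t)) := by
  intro t
  induction t with
  | zero => intro _ i; exact mem_satS_of_mem (hrun i)
  | succ t ih =>
    intro ht i
    have htl : t < p.len := by omega
    have hv := p.valid t htl
    have iht := ih (by omega)
    rcases hs : p.sync t with _ | ⟨a, procs⟩
    · rw [hs] at hv
      rw [numB_succ_bcast p hs]
      exact mem_satS_of_mem ⟨p.conf t i, iht i, hv i⟩
    · rw [hs] at hv
      rw [numB_succ_rdz p hs]
      obtain ⟨hinj, hed, hfr⟩ := hv
      by_cases hx : ∃ jj, procs jj = i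
      · obtain ⟨jj, rfl⟩ := hx
        exact (satS_closed _).2 _ a jj _ (iht _) (hed jj)
          (fun l => ⟨p.conf t (procs l), p.conf (t+1) (procs l), iht _, hed l⟩)
      · push_neg at hx
        rw [hfr i hx]
        exact iht i

variable {n₀ m : ℕ}

/-- partial projection of process 0 -/
noncomputable def projUpTo {ι : Type} (p : FinPath P ι) (i : ι) (t : ℕ) :
    List (EdgeT k A S) :=
  (List.range t).filterMap (fun u => edgeAt (p.conf u) (p.conf (u + 1)) (p.sync u) i)

lemma projUpTo_len {ι : Type} (p : FinPath P ι) (i : ι) :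
    projUpTo p i p.len = p.proj i := rfl

/-- soundness direction: executions are accepted -/
lemma exec_accepted (hL : IsLasso P n₀ m) {w : List (EdgeT k A S)}
    (hw : w ∈ execFin P) : w ∈ (APfin P n₀ m).accepts := by
  obtain ⟨n, p, hrun, hproj⟩ := hw
  have hnm : n₀ ≤ m := hL.1
  have main : ∀ t, t ≤ p.len →
      (p.conf t 0, compAt n₀ m (numB p t)) ∈
        (APfin P n₀ m).evalFrom (APfin P n₀ m).start (projUpTo p 0 t) := by
    intro t
    induction t with
    | zero =>
      intro _
      show _ ∈ (APfin P n₀ m).start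
      exact ⟨hrun 0, compAt_zero (n₀ := n₀) (m := m)⟩
    | succ t ih =>
      intro ht
      have htl : t < p.len := by omega
      have hv := p.valid t htl
      have ihe := ih (by omega)
      have hSat := run_inv p hrun t (by omega)
      have hup : projUpTo p 0 (t + 1) = projUpTo p 0 t ++
          (edgeAt (p.conf t) (p.conf (t+1)) (p.sync t) 0).toList := by
        unfold projUpTo
        rw [List.range_succ, List.filterMap_append]
        rcases hopt : edgeAt (p.conf t) (p.conf (t+1)) (p.sync t) 0 with _ | e <;>
          simp [List.filterMap_cons, hopt]
      rcases hs : p.sync t with _ | ⟨a, procs⟩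
      · -- broadcast
        rw [hs] at hv
        have hedge : (p.conf t 0, Sum.inr (), p.conf (t+1) 0) ∈ P.R := hv 0
        rw [hup, hs]
        rw [show (edgeAt (p.conf t) (p.conf (t+1)) Sync.bcast (0 : Fin (n+1))).toList
          = [(p.conf t 0, Sum.inr (), p.conf (t+1) 0)] from rfl]
        rw [(APfin P n₀ m).evalFrom_append, NFA.evalFrom_singleton, NFA.mem_stepSet]
        refine ⟨(p.conf t 0, compAt n₀ m (numB p t)), ihe, ?_, rfl, ?_⟩
        · refine Or.inr ⟨p.conf t 0, p.conf (t+1) 0, compAt n₀ m (numB p t),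
            compAt_le hnm _, ?_, ?_, hedge⟩
          · show _ = _
            rw [numB_succ_bcast p hs, ← compAt_succ hnm]
          · rw [compI_compAt hL]
            exact hSat 0
        · rfl
      · -- rendezvous
        rw [hs] at hv
        obtain ⟨hinj, hed, hfr⟩ := hv
        by_cases hx : ∃ jj, procs jj = 0
        · obtain ⟨jj, hjj⟩ := hx
          have hea : edgeAt (p.conf t) (p.conf (t+1)) (.rdz a procs) 0 =
              some (p.conf t 0, Sum.inl (a, jj), p.conf (t+1) 0) :=
            edgeAt_rdz_eq _ _ a procs hinj jj 0 hjj
          rw [hup, hs, hea]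
          rw [show (some (p.conf t 0, Sum.inl (a, jj), p.conf (t+1) 0)).toList
            = [(p.conf t 0, Sum.inl (a, jj), p.conf (t+1) 0)] from rfl]
          rw [(APfin P n₀ m).evalFrom_append, NFA.evalFrom_singleton, NFA.mem_stepSet]
          rw [numB_succ_rdz p hs]
          refine ⟨(p.conf t 0, compAt n₀ m (numB p t)), ihe, ?_, rfl, rfl⟩
          refine Or.inl ⟨p.conf t 0, p.conf (t+1) 0, (a, jj), compAt n₀ m (numB p t),
            compAt_le hnm _, rfl, ?_⟩
          refine ⟨p.conf t 0, a, jj, p.conf (t+1) 0, rfl, ?_, ?_, ?_⟩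
          · rw [compI_compAt hL]; exact hSat 0
          · rw [← hjj]; exact hed jj
          · intro l
            refine ⟨p.conf t (procs l), p.conf (t+1) (procs l), ?_, hed l⟩
            rw [compI_compAt hL]; exact hSat _
        · push_neg at hx
          have hea : edgeAt (p.conf t) (p.conf (t+1)) (.rdz a procs) 0 = none :=
            edgeAt_rdz_none _ _ a procs 0 hx
          rw [hup, hs, hea]
          rw [numB_succ_rdz p hs, hfr 0 hx]
          simpa using ihe
  have := main p.len le_rfl
  rw [projUpTo_len, hproj] at this
  exact ⟨_, trivial, this⟩

end Aux5
section Aux6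

variable {k : ℕ} {A S : Type} {P : RBTemplate k A S} {n₀ m : ℕ}

/-- completeness direction: accepted words are executions -/
lemma accepted_exec (hTot : P.BTotal) (hL : IsLasso P n₀ m)
    {w : List (EdgeT k A S)} (hw : w ∈ (APfin P n₀ m).accepts) : w ∈ execFin P := by
  have hnm : n₀ ≤ m := hL.1
  have main : ∀ (w : List (EdgeT k A S)) (q : S × ℕ),
      q ∈ (APfin P n₀ m).evalFrom (APfin P n₀ m).start w →
      ∃ (ι : Type) (_ : Fintype ι) (i₀ : ι) (f : ι → S)
        (tr : ι → List (EdgeT k A S)) (j : ℕ),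
        ReachT P j f tr ∧ f i₀ = q.1 ∧ tr i₀ = w ∧ compAt n₀ m j = q.2 := by
    intro w
    induction w using List.reverseRecOn with
    | nil =>
      intro q hq
      obtain ⟨hI, h0⟩ : q.1 ∈ P.I ∧ q.2 = 0 := hq
      exact ⟨PUnit, inferInstance, ⟨⟩, fun _ => q.1, fun _ => [], 0,
        .init _ (fun _ => hI), rfl, rfl, by rw [compAt_zero, h0]⟩
    | append_singleton ws e ih =>
      intro q hq
      rw [(APfin P n₀ m).evalFrom_append, NFA.evalFrom_singleton, NFA.mem_stepSet] at hq
      obtain ⟨q₀, hq₀, hstep⟩ := hq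
      obtain ⟨hR, he1, he22⟩ := hstep
      obtain ⟨ι, ft, i₀, f, tr, j, hr, hf, htr, hcj⟩ := ih q₀ hq₀
      rcases hR with ⟨s, t, ς, i, him, heq, hSatR⟩ | ⟨s, t, i, him, heq, hSat, hedge⟩
      · -- rendezvous edge of the unwinding
        have hq0 : q₀ = (s, i) := congrArg (fun x => x.1) heq
        have hlab : e.2.1 = Sum.inl ς := congrArg (fun x => x.2.1) heq
        have hq1 : q = (t, i) := congrArg (fun x => x.2.2) heq
        obtain ⟨s', a, hh, t', heq2, hSatS, hmemR, hpart⟩ := hSatR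
        simp only [Prod.mk.injEq, Sum.inl.injEq] at heq2
        obtain ⟨hs', hς, ht'⟩ := heq2
        subst hs'
        subst ht'
        subst hς
        have hi : compAt n₀ m j = i := by rw [hcj, hq0]
        have hcompI : compI P i = compI P j := by
          rw [← hi, compI_compAt hL]
        have hfi : f i₀ = s := by rw [hf, hq0]
        have hmain := reachT_rdz_step hr i₀ hfi hmemR (fun l => by
          obtain ⟨s₂, t₂, hs₂, he₂⟩ := hpart l
          exact ⟨s₂, t₂, flood hTot j s₂ (by rwa [← hcompI]), he₂⟩)
        obtain ⟨ι', ft', i₀', f', tr', hr', hf', htr'⟩ := hmain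
        refine ⟨ι', ft', i₀', f', tr', j, hr', ?_, ?_, ?_⟩
        · rw [hf', hq1]
        · rw [htr', htr]
          congr 1
          have he : e = (q₀.1, e.2.1, q.1) := by
            rw [← he1, ← he22]
          rw [he, hq0, hq1, hlab]
        · rw [hcj, hq0, hq1]
      · -- broadcast edge of the unwinding
        have hq0 : q₀ = (s, i) := congrArg (fun x => x.1) heq
        have hlab : e.2.1 = Sum.inr () := congrArg (fun x => x.2.1) heq
        have hq1 : q = (t, compAt n₀ m (i + 1)) := congrArg (fun x => x.2.2) heq
        have hfi : f i₀ = s := by rw [hf, hq0]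
        obtain ⟨g, hg, hgi⟩ := reachT_bcast_step hTot hr i₀ hfi hedge
        refine ⟨ι, ft, i₀, g, _, j + 1, hg, ?_, ?_, ?_⟩
        · rw [hgi, hq1]
        · show tr i₀ ++ [(f i₀, Sum.inr (), g i₀)] = ws ++ [e]
          rw [htr, hfi, hgi]
          congr 1
          have he : e = (q₀.1, e.2.1, q.1) := by rw [← he1, ← he22]
          rw [he, hq0, hq1, hlab]
        · have hi : compAt n₀ m j = i := by rw [hcj, hq0]
          rw [hq1, ← hi, compAt_succ hnm j]
  obtain ⟨q, -, hq⟩ := hw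
  obtain ⟨ι, ft, i₀, f, tr, j, hr, hf, htr, -⟩ := main w q hq
  exact real_to_execFin ⟨ι, ft, i₀, f, tr, hr, htr⟩

end Aux6
section Aux7

variable {k : ℕ} {A S : Type} {P : RBTemplate k A S} {n₀ m : ℕ}

/-- a copy of `A_P^fin` over the finite state space `S × Fin (m+1)` -/
def APfinSmall (P : RBTemplate k A S) (n₀ m : ℕ) :
    NFA (EdgeT k A S) (S × Fin (m + 1)) where
  step := fun q e =>
    {q' | (((q.1, (q.2 : ℕ)) : S × ℕ), e.2.1, ((q'.1, (q'.2 : ℕ)) : S × ℕ)) ∈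
        (unwind P n₀ m).R ∧ e.1 = q.1 ∧ e.2.2 = q'.1}
  start := {q | q.1 ∈ P.I ∧ (q.2 : ℕ) = 0}
  accept := Set.univ

lemma apfin_step_snd_le (hnm : n₀ ≤ m) {q q' : S × ℕ} {e : EdgeT k A S}
    (h : q' ∈ (APfin P n₀ m).step q e) : q'.2 ≤ m := by
  obtain ⟨hR, -, -⟩ := h
  rcases hR with ⟨s, t, ς, i, him, heq, -⟩ | ⟨s, t, i, him, heq, -, -⟩
  · have : q' = (t, i) := congrArg (fun x => x.2.2) heq
    rw [this]; exact him
  · have : q' = (t, compAt n₀ m (i + 1)) := congrArg (fun x => x.2.2) heq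
    rw [this]; exact compAt_le hnm _

lemma apfin_small_sim (hnm : n₀ ≤ m) (w : List (EdgeT k A S)) :
    (∀ sb ∈ (APfin P n₀ m).evalFrom (APfin P n₀ m).start w,
      ∃ qs ∈ (APfinSmall P n₀ m).evalFrom (APfinSmall P n₀ m).start w,
        ((qs.1, (qs.2 : ℕ)) : S × ℕ) = sb) ∧
    (∀ qs ∈ (APfinSmall P n₀ m).evalFrom (APfinSmall P n₀ m).start w,
      ((qs.1, (qs.2 : ℕ)) : S × ℕ) ∈ (APfin P n₀ m).evalFrom (APfin P n₀ m).start w) := by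
  induction w using List.reverseRecOn with
  | nil =>
    constructor
    · intro sb hsb
      obtain ⟨hI, h0⟩ : sb.1 ∈ P.I ∧ sb.2 = 0 := hsb
      refine ⟨(sb.1, ⟨0, by omega⟩), ⟨hI, rfl⟩, ?_⟩
      show ((sb.1, 0) : S × ℕ) = sb
      rw [← h0]
    · intro qs hqs
      obtain ⟨hI, h0⟩ := hqs
      exact ⟨hI, h0⟩
  | append_singleton ws e ih =>
    constructor
    · intro sb hsb
      rw [(APfin P n₀ m).evalFrom_append, NFA.evalFrom_singleton, NFA.mem_stepSet] at hsb
      obtain ⟨sb₀, hsb₀, hstep⟩ := hsb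
      obtain ⟨qs₀, hqs₀, hψ⟩ := ih.1 sb₀ hsb₀
      have hle : sb.2 ≤ m := apfin_step_snd_le hnm hstep
      refine ⟨(sb.1, ⟨sb.2, by omega⟩), ?_, rfl⟩
      rw [(APfinSmall P n₀ m).evalFrom_append, NFA.evalFrom_singleton, NFA.mem_stepSet]
      refine ⟨qs₀, hqs₀, ?_⟩
      show (((qs₀.1, (qs₀.2 : ℕ)) : S × ℕ), e.2.1, ((sb.1, sb.2) : S × ℕ)) ∈ _ ∧ _ ∧ _
      rw [hψ]
      obtain ⟨h1, h2, h3⟩ := hstep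
      exact ⟨h1, h2.trans (congrArg Prod.fst hψ).symm, h3⟩
    · intro qs hqs
      rw [(APfinSmall P n₀ m).evalFrom_append, NFA.evalFrom_singleton, NFA.mem_stepSet] at hqs
      obtain ⟨qs₀, hqs₀, hstep⟩ := hqs
      rw [(APfin P n₀ m).evalFrom_append, NFA.evalFrom_singleton, NFA.mem_stepSet]
      exact ⟨_, ih.2 qs₀ hqs₀, hstep⟩

lemma apfin_small_accepts (hnm : n₀ ≤ m) :
    (APfinSmall P n₀ m).accepts = (APfin P n₀ m).accepts := by
  ext w
  constructor
  · rintro ⟨q, -, hq⟩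
    exact ⟨_, trivial, (apfin_small_sim hnm w).2 q hq⟩
  · rintro ⟨q, -, hq⟩
    obtain ⟨qs, hqs, -⟩ := (apfin_small_sim hnm w).1 q hq
    exact ⟨qs, trivial, hqs⟩

end Aux7
/-- The set of finite executions of the RB-system induced by `P` is
a regular language over the alphabet of edges of `P`: it is recognized by the NFA
`A_P^fin`, whose state set `S^⊸` has at most `|S| · 2^|S|` elements. -/
theorem execFin_regular
    {k : ℕ} {A S : Type} [Fintype A] [Fintype S] (hk : 2 ≤ k)
    (P : RBTemplate k A S) (hTot : P.BTotal) (hU : P.UniqLab)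
    (n₀ m : ℕ) (hL : IsLasso P n₀ m) :
    (∀ w : List (EdgeT k A S), w ∈ (APfin P n₀ m).accepts ↔ w ∈ execFin P) ∧
    Language.IsRegular (execFin P : Language (EdgeT k A S)) ∧
    Nat.card {x : S × ℕ // x.2 ≤ m ∧ x.1 ∈ SatS P (compI P x.2)} ≤
      Fintype.card S * 2 ^ Fintype.card S := by
  have hnm : n₀ ≤ m := hL.1
  have hiff : ∀ w : List (EdgeT k A S),
      w ∈ (APfin P n₀ m).accepts ↔ w ∈ execFin P :=
    fun w => ⟨fun h => accepted_exec hTot hL h, fun h => exec_accepted hL h⟩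
  refine ⟨hiff, ?_, ?_⟩
  · refine ⟨Set (S × Fin (m + 1)), inferInstance, (APfinSmall P n₀ m).toDFA, ?_⟩
    rw [NFA.toDFA_correct, apfin_small_accepts hnm]
    ext w
    exact hiff w
  · have hm2 : m + 1 ≤ 2 ^ Fintype.card S := by
      have hg : Function.Injective (fun i : Fin (m + 1) => compI P (i : ℕ)) := by
        intro i j h
        rcases lt_trichotomy (i : ℕ) (j : ℕ) with hij | hij | hij
        · exact absurd h (hL.2.2 i j hij (by omega))
        · exact Fin.ext hij
        · exact absurd h.symm (hL.2.2 j i hij (by omega))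
      have := Nat.card_le_card_of_injective _ hg
      simpa [Nat.card_eq_fintype_card, Fintype.card_set] using this
    have hφ : Function.Injective
        (fun x : {x : S × ℕ // x.2 ≤ m ∧ x.1 ∈ SatS P (compI P x.2)} =>
          ((x.1.1, ⟨x.1.2, by omega⟩) : S × Fin (m + 1))) := by
      intro x y h
      simp only [Prod.mk.injEq, Fin.mk.injEq] at h
      exact Subtype.ext (Prod.ext_iff.mpr ⟨h.1, h.2⟩)
    have hle := Nat.card_le_card_of_injective _ hφ
    have hcard : Nat.card (S × Fin (m + 1)) = Fintype.card S * (m + 1) := by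
      simp [Nat.card_eq_fintype_card]
    rw [hcard] at hle
    exact hle.trans (Nat.mul_le_mul_left _ hm2)
end

section
/- There exists an RB-template P (with k = 2) such that exec_inf(P), the set of infinite executions of the induced RB-system viewed as a language of infinite words over the finite alphabet of edges of P, is not ω-regular; a witness is the template P⋆ with states {p,q}, initial states {p}, one rendezvous action a, rendezvous edges (p,a_1,p) and (p,a_2,q), and broadcast edges (p,𝔟,p) and (q,𝔟,p). -/
/-! ### The witness template `P⋆` (Figure 2):
states `p = false`, `q = true`; one rendezvous action; `k = 2`;
rendezvous edges `(p, a₁, p)`, `(p, a₂, q)`; broadcast edges `(p, 𝔟, p)`, `(q, 𝔟, p)`. -/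

def Pstar : RBTemplate 2 Unit Bool where
  I := {false}
  R := {(false, Sum.inl ((), (0 : Fin 2)), false),
        (false, Sum.inl ((), (1 : Fin 2)), true),
        (false, Sum.inr (), false),
        (true, Sum.inr (), false)}

/-- The finite segment `w i, w (i+1), …, w (j-1)` of an infinite word. -/
def SegOf {α : Type} (w : ℕ → α) (i j : ℕ) : List α :=
  (List.range (j - i)).map (fun t => w (i + t))

/-- `U · V^ω`: infinite words obtained as a prefix in `U` followed by infinitely many
consecutive nonempty segments in `V` (cut points `c 0 < c 1 < ⋯`). -/
def OmegaCat {α : Type} (U V : Language α) : Set (ℕ → α) :=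
  {w | ∃ c : ℕ → ℕ, StrictMono c ∧ SegOf w 0 (c 0) ∈ U ∧
    ∀ i, SegOf w (c i) (c (i + 1)) ∈ V}

/-- A language of infinite words is ω-regular if it is a finite union
`⋃ i, U_i · V_i^ω` with `U_i`, `V_i` regular and `[] ∉ V_i`. -/
def IsOmegaRegular {α : Type} (L : Set (ℕ → α)) : Prop :=
  ∃ (p : ℕ) (U V : Fin p → Language α),
    (∀ i, (U i).IsRegular ∧ (V i).IsRegular ∧ [] ∉ V i) ∧
    L = ⋃ i, OmegaCat (U i) (V i)


/-! ### Auxiliary development -/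

namespace NotOmegaReg

/-- The rendezvous self-loop edge `(p, a₁, p)` of process 0. -/
def e1 : EdgeT 2 Unit Bool := (false, Sum.inl ((), (0 : Fin 2)), false)

/-- The broadcast edge `(p, 𝔟, p)` of process 0. -/
def eb : EdgeT 2 Unit Bool := (false, Sum.inr (), false)

/-- The periodic word `(e1^n 𝔟)^ω`. -/
def wper (n : ℕ) : ℕ → EdgeT 2 Unit Bool :=
  fun t => if t % (n + 1) = n then eb else e1

lemma mod_succ_lt (n t : ℕ) (h : t % (n + 1) < n) :
    (t + 1) % (n + 1) = t % (n + 1) + 1 := by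
  have hd := Nat.div_add_mod t (n + 1)
  rw [show t + 1 = (n + 1) * (t / (n + 1)) + (t % (n + 1) + 1) by omega,
    Nat.mul_add_mod]
  exact Nat.mod_eq_of_lt (by omega)

lemma mod_succ_eq (n t : ℕ) (h : t % (n + 1) = n) :
    (t + 1) % (n + 1) = 0 := by
  have hd := Nat.div_add_mod t (n + 1)
  rw [show t + 1 = (n + 1) * (t / (n + 1)) + (n + 1) by omega, ← Nat.mul_succ,
    Nat.mul_mod_right]

/-- Configurations of the witness run: at time `t`, processes `1, …, t % (n+1)`
are in state `q = true`, all others in `p = false`. -/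
def confA (n : ℕ) : ℕ → Fin (n + 1) → Bool :=
  fun t i => decide (1 ≤ (i : ℕ) ∧ (i : ℕ) ≤ t % (n + 1))

/-- Synchronization labels of the witness run. -/
def syncA (n : ℕ) : ℕ → Sync 2 Unit (Fin (n + 1)) :=
  fun t =>
    if h : t % (n + 1) < n then
      Sync.rdz () ![0, ⟨t % (n + 1) + 1, by omega⟩]
    else Sync.bcast

lemma injA (n r : ℕ) (hr : r + 1 < n + 1) :
    Function.Injective ![(0 : Fin (n+1)), ⟨r + 1, hr⟩] := by
  intro x y hxy
  fin_cases x <;> fin_cases y <;> simp_all [Fin.ext_iff]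

lemma confA_zero (n t : ℕ) : confA n t 0 = false := by
  simp only [confA, Fin.val_zero, decide_eq_false_iff_not]
  exact decide_eq_false (by omega)

lemma validA (n t : ℕ) : RBTrans Pstar (confA n t) (syncA n t) (confA n (t + 1)) := by
  unfold syncA
  by_cases h : t % (n + 1) < n
  · rw [dif_pos h]
    have hmod := mod_succ_lt n t h
    refine ⟨injA n _ (by omega), ?_, ?_⟩
    · intro j
      fin_cases j <;>
        simp only [Fin.zero_eta, Fin.mk_one, Matrix.cons_val_zero, Matrix.cons_val_one,
          Matrix.head_cons]
      · rw [confA_zero, confA_zero]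
        simp [Pstar]
      · have h1 : confA n t ⟨t % (n+1) + 1, by omega⟩ = false := by
          simp only [confA, decide_eq_false_iff_not]
          omega
        have h2 : confA n (t+1) ⟨t % (n+1) + 1, by omega⟩ = true := by
          simp only [confA, hmod, decide_eq_true_eq]
          omega
        rw [h1, h2]
        simp [Pstar]
    · intro i hi
      have hi0 : (i : ℕ) ≠ 0 := by
        intro hc
        exact hi 0 (by simp [Fin.ext_iff, hc])
      have hi1 : (i : ℕ) ≠ t % (n+1) + 1 := by
        intro hc
        exact hi 1 (by simp [Fin.ext_iff, hc])
      simp only [confA, hmod]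
      exact decide_eq_decide.mpr (by omega)
  · rw [dif_neg h]
    have heq : t % (n + 1) = n := by
      have := Nat.mod_lt t (show 0 < n + 1 by omega); omega
    have hmod := mod_succ_eq n t heq
    intro i
    have h2 : confA n (t + 1) i = false := by
      simp only [confA, hmod, decide_eq_false_iff_not]
      omega
    rw [h2]
    cases hc : confA n t i <;> simp [Pstar]

/-- The witness run as an infinite path. -/
def pathA (n : ℕ) : InfPath Pstar (Fin (n + 1)) where
  conf := confA n
  sync := syncA n
  valid := fun t => validA n t

lemma memA (n : ℕ) : wper n ∈ execInf Pstar := by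
  refine ⟨n, pathA n, ?_, id, strictMono_id, ?_, ?_⟩
  · intro i
    show confA n 0 i ∈ Pstar.I
    have : confA n 0 i = false := by
      simp only [confA, Nat.zero_mod, decide_eq_false_iff_not]
      exact decide_eq_false (by omega)
    rw [this]
    simp [Pstar]
  · intro t
    constructor
    · intro _; exact ⟨t, rfl⟩
    · intro _
      show Sync.Moved (syncA n t) 0
      unfold syncA
      by_cases h : t % (n + 1) < n
      · rw [dif_pos h]; exact ⟨0, rfl⟩
      · rw [dif_neg h]; trivial
  · intro m
    show edgeAt (confA n m) (confA n (m+1)) (syncA n m) 0 = some (wper n m)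
    unfold syncA
    by_cases h : m % (n + 1) < n
    · rw [dif_pos h]
      have hex : ∃ j, ![(0 : Fin (n+1)), ⟨m % (n+1) + 1, by omega⟩] j = 0 := ⟨0, rfl⟩
      have hred : edgeAt (confA n m) (confA n (m+1))
          (Sync.rdz () ![(0 : Fin (n+1)), ⟨m % (n+1) + 1, by omega⟩]) 0 =
          @dite _ (∃ j, ![(0 : Fin (n+1)), ⟨m % (n+1) + 1, by omega⟩] j = 0)
            (Classical.propDecidable _)
            (fun h => some (confA n m 0, Sum.inl ((), Classical.choose h), confA n (m+1) 0))
            (fun _ => none) := rfl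
      rw [hred, dif_pos hex]
      have hch : Classical.choose hex = 0 := by
        apply injA n (m % (n+1)) (by omega)
        rw [Classical.choose_spec hex]
        rfl
      rw [hch, confA_zero, confA_zero]
      simp [wper, e1, Nat.ne_of_lt h]
    · rw [dif_neg h]
      have heq : m % (n + 1) = n := by
        have := Nat.mod_lt m (show 0 < n + 1 by omega); omega
      have hred : edgeAt (confA n m) (confA n (m+1)) (Sync.bcast : Sync 2 Unit (Fin (n+1))) 0 =
          some (confA n m 0, Sum.inr (), confA n (m+1) 0) := rfl
      rw [hred, confA_zero, confA_zero]
      simp [wper, eb, heq]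

end NotOmegaReg

namespace NotOmegaReg

lemma pstar_inl {s t : Bool} {ς : Unit × Fin 2} (h : (s, Sum.inl ς, t) ∈ Pstar.R) :
    s = false ∧ ((ς.2 = 0 ∧ t = false) ∨ (ς.2 = 1 ∧ t = true)) := by
  obtain ⟨⟨⟩, j⟩ := ς
  simp only [Pstar, Set.mem_insert_iff, Set.mem_singleton_iff, Prod.mk.injEq] at h
  rcases h with ⟨h1, h2, h3⟩ | ⟨h1, h2, h3⟩ | ⟨h1, h2, h3⟩ | ⟨h1, h2, h3⟩ <;>
    simp_all

/-- Analysis of a global transition in which process 0 takes the edge `e1`: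
it is not a broadcast, and some other process moves from `p` to `q`. -/
lemma step0 {N : ℕ} {f g : Fin (N + 1) → Bool} {σ : Sync 2 Unit (Fin (N + 1))}
    (hT : RBTrans Pstar f σ g) (hE : edgeAt f g σ 0 = some e1) :
    σ ≠ Sync.bcast ∧ ∃ i : Fin (N + 1), i ≠ 0 ∧ f i = false ∧ g i = true := by
  cases σ with
  | bcast =>
    exfalso
    have : edgeAt f g (Sync.bcast : Sync 2 Unit (Fin (N+1))) 0 =
        some (f 0, Sum.inr (), g 0) := rfl
    rw [this, e1] at hE
    simp at hE
  | rdz a procs =>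
    refine ⟨by simp, ?_⟩
    obtain ⟨hinj, hedges, -⟩ := hT
    have hred : edgeAt f g (Sync.rdz a procs) 0 =
        @dite _ (∃ j, procs j = 0) (Classical.propDecidable _)
          (fun h => some (f 0, Sum.inl (a, Classical.choose h), g 0))
          (fun _ => none) := rfl
    rw [hred] at hE
    by_cases hex : ∃ j, procs j = 0
    · rw [dif_pos hex] at hE
      rw [e1] at hE
      have hE' := Option.some.inj hE
      have h2 := congrArg (fun x : EdgeT 2 Unit Bool => x.2.1) hE'
      have h3 := Sum.inl.inj h2
      have hch : Classical.choose hex = 0 := congrArg Prod.snd h3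
      have hp0 : procs 0 = 0 := by rw [← hch]; exact Classical.choose_spec hex
      have he1 := hedges 1
      obtain ⟨hf1, hcases⟩ := pstar_inl he1
      rcases hcases with ⟨hj, -⟩ | ⟨-, hg1⟩
      · exact absurd hj (by simp)
      · refine ⟨procs 1, ?_, hf1, hg1⟩
        intro hc
        rw [← hp0] at hc
        exact absurd (hinj hc) (by decide)
    · rw [dif_neg hex] at hE
      exact absurd hE (by simp)

/-- In a non-broadcast transition, a process in state `q = true` stays in `q`. -/
lemma true_persists {N : ℕ} {f g : Fin (N + 1) → Bool} {σ : Sync 2 Unit (Fin (N + 1))}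
    (hT : RBTrans Pstar f σ g) (hnb : σ ≠ Sync.bcast) {i : Fin (N + 1)}
    (h : f i = true) : g i = true := by
  cases σ with
  | bcast => exact absurd rfl hnb
  | rdz a procs =>
    obtain ⟨-, hedges, hframe⟩ := hT
    by_cases hex : ∃ j, procs j = i
    · obtain ⟨j, hj⟩ := hex
      have := (pstar_inl (hj ▸ hedges j)).1
      rw [h] at this
      exact absurd this (by simp)
    · push_neg at hex
      rw [hframe i hex, h]

/-- Boundedness (Lemma B): every infinite execution of `Pstar` has uniformly
bounded runs of the edge `e1`. -/
lemma boundedB {w : ℕ → EdgeT 2 Unit Bool} (hw : w ∈ execInf Pstar) :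
    ∃ N, 0 < N ∧ ∀ t, ∃ r, r < N ∧ w (t + r) ≠ e1 := by
  obtain ⟨n, p, hrun, ι, hmono, hmoved, hedge⟩ := hw
  refine ⟨n + 1, by omega, fun t => ?_⟩
  by_contra hcon
  push_neg at hcon
  -- hcon : ∀ r < n + 1, w (t + r) = e1
  -- no broadcast occurs between times ι t and ι (t + n)
  have hnb : ∀ u, ι t ≤ u → u ≤ ι (t + n) → p.sync u ≠ Sync.bcast := by
    intro u h0 h1 hb
    have hm : Sync.Moved (p.sync u) 0 := by rw [hb]; exact trivial
    obtain ⟨m, hm'⟩ := (hmoved u).1 hm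
    have hm1 : t ≤ m := by
      by_contra hx
      push_neg at hx
      have := hmono hx
      omega
    have hm2 : m ≤ t + n := by
      by_contra hx
      push_neg at hx
      have := hmono hx
      omega
    have he := hedge m
    rw [hm', hb] at he
    have hwm : w m = e1 := by
      have := hcon (m - t) (by omega)
      rwa [show t + (m - t) = m by omega] at this
    rw [hwm] at he
    have hred : edgeAt (p.conf u) (p.conf (u + 1))
        (Sync.bcast : Sync 2 Unit (Fin (n + 1))) 0 =
        some (p.conf u 0, Sum.inr (), p.conf (u + 1) 0) := rfl
    rw [hred, e1] at he
    simp at he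
  -- truth persists on the whole interval
  have hpers : ∀ d u, ι t ≤ u → u + d ≤ ι (t + n) → ∀ i : Fin (n + 1),
      p.conf u i = true → p.conf (u + d) i = true := by
    intro d
    induction d with
    | zero => intro u _ _ i h; exact h
    | succ d ih =>
      intro u h0 h1 i h
      have hd : u + (d + 1) = (u + d) + 1 := by omega
      rw [hd]
      exact true_persists (p.valid (u + d)) (hnb (u + d) (by omega) (by omega))
        (ih u h0 (by omega) i h)
  -- each of the n+1 rendezvous has a distinct nonzero partner
  have hpart : ∀ r : Fin (n + 1), ∃ i : Fin (n + 1), i ≠ 0 ∧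
      p.conf (ι (t + r)) i = false ∧ p.conf (ι (t + r) + 1) i = true := by
    intro r
    have he := hedge (t + r)
    rw [hcon r (by omega)] at he
    exact (step0 (p.valid (ι (t + r))) he).2
  choose F hF0 hFf hFt using hpart
  have hkey : ∀ r r' : Fin (n + 1), r < r' → F r ≠ F r' := by
    intro r r' hlt heq
    have hlt' : ι (t + (r : ℕ)) < ι (t + (r' : ℕ)) := hmono (by omega)
    have hle : ι (t + (r : ℕ)) + 1 + (ι (t + (r' : ℕ)) - (ι (t + (r : ℕ)) + 1)) =
        ι (t + (r' : ℕ)) := by omega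
    have h1 : p.conf (ι (t + (r' : ℕ))) (F r) = true := by
      have := hpers (ι (t + (r' : ℕ)) - (ι (t + (r : ℕ)) + 1)) (ι (t + (r : ℕ)) + 1)
        (by have := hmono.monotone (show t ≤ t + (r : ℕ) by omega); omega)
        (by rw [hle]; exact hmono.monotone (by omega))
        (F r) (hFt r)
      rwa [hle] at this
    rw [heq, hFf r'] at h1
    exact absurd h1 (by simp)
  have hinj : Function.Injective F := by
    intro r r' h
    rcases lt_trichotomy r r' with hlt | heq | hlt
    · exact absurd h (hkey r r' hlt)
    · exact heq
    · exact absurd h.symm (hkey r' r hlt)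
  obtain ⟨r, hr⟩ := (Finite.injective_iff_bijective.mp hinj).2 0
  exact hF0 r hr

end NotOmegaReg

namespace NotOmegaReg

/-! ### Gluing infinitely many finite pieces into one infinite word -/

/-- Partial sums of a sequence of lengths. -/
def osum (L : ℕ → ℕ) : ℕ → ℕ := fun j => ∑ i ∈ Finset.range j, L i

lemma osum_succ (L : ℕ → ℕ) (j : ℕ) : osum L (j + 1) = osum L j + L j :=
  Finset.sum_range_succ L j

lemma osum_mono (L : ℕ → ℕ) : Monotone (osum L) := by
  intro a b hab
  exact Finset.sum_le_sum_of_subset (Finset.range_subset_range.mpr hab)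

lemma le_osum (L : ℕ → ℕ) (hL : ∀ j, 1 ≤ L j) (j : ℕ) : j ≤ osum L j := by
  calc j = ∑ i ∈ Finset.range j, 1 := by simp
  _ ≤ osum L j := Finset.sum_le_sum fun i _ => hL i

/-- The index of the piece containing position `t`. -/
def locate (L : ℕ → ℕ) (t : ℕ) : ℕ :=
  Nat.findGreatest (fun j => osum L j ≤ t) (t + 1)

lemma locate_spec (L : ℕ → ℕ) (hL : ∀ j, 1 ≤ L j) (t : ℕ) :
    osum L (locate L t) ≤ t ∧ t < osum L (locate L t + 1) := by
  constructor
  · have h0 : osum L 0 = 0 := by simp [osum]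
    unfold locate
    exact Nat.findGreatest_spec (P := fun j => osum L j ≤ t) (Nat.zero_le _) (by omega)
  · by_contra hx
    push_neg at hx
    have hb : locate L t + 1 ≤ t + 1 := by
      have := le_osum L hL (locate L t + 1)
      omega
    exact Nat.findGreatest_is_greatest (P := fun j => osum L j ≤ t)
      (Nat.lt_succ_self _) hb hx

lemma locate_eq (L : ℕ → ℕ) (hL : ∀ j, 1 ≤ L j) {j t : ℕ}
    (h1 : osum L j ≤ t) (h2 : t < osum L (j + 1)) : locate L t = j := by
  obtain ⟨g1, g2⟩ := locate_spec L hL t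
  rcases lt_trichotomy (locate L t) j with h | h | h
  · have : osum L (locate L t + 1) ≤ osum L j := osum_mono L (by omega)
    omega
  · exact h
  · have : osum L (j + 1) ≤ osum L (locate L t) := osum_mono L (by omega)
    omega

/-- The infinite word obtained by concatenating the pieces `P j` (of length `L j`). -/
def glue (P : ℕ → ℕ → EdgeT 2 Unit Bool) (L : ℕ → ℕ) : ℕ → EdgeT 2 Unit Bool :=
  fun t => P (locate L t) (t - osum L (locate L t))

lemma glue_eq (P : ℕ → ℕ → EdgeT 2 Unit Bool) (L : ℕ → ℕ) (hL : ∀ j, 1 ≤ L j)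
    (j x : ℕ) (hx : x < L j) : glue P L (osum L j + x) = P j x := by
  have hloc : locate L (osum L j + x) = j :=
    locate_eq L hL (by omega) (by rw [osum_succ]; omega)
  rw [glue, hloc, Nat.add_sub_cancel_left]

lemma glue_seg (P : ℕ → ℕ → EdgeT 2 Unit Bool) (L : ℕ → ℕ) (hL : ∀ j, 1 ≤ L j)
    (j x y : ℕ) (hy : y ≤ L j) :
    SegOf (glue P L) (osum L j + x) (osum L j + y) = SegOf (P j) x y := by
  unfold SegOf
  rw [show osum L j + y - (osum L j + x) = y - x by omega]
  apply List.map_congr_left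
  intro u hu
  rw [List.mem_range] at hu
  rw [show osum L j + x + u = osum L j + (x + u) by omega]
  exact glue_eq P L hL j (x + u) (by omega)

/-- A shifted word has shifted segments. -/
lemma seg_shift (w : ℕ → EdgeT 2 Unit Bool) (b x y : ℕ) :
    SegOf (fun u => w (b + u)) x y = SegOf w (b + x) (b + y) := by
  unfold SegOf
  rw [show b + y - (b + x) = y - x by omega]
  apply List.map_congr_left
  intro u hu
  rw [show b + x + u = b + (x + u) by omega]

/-- A long-enough window of `wper n` contains a run of `n` consecutive `e1`s. -/
lemma wper_run (n s : ℕ) :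
    ∃ t, s ≤ t ∧ t + n ≤ s + 2 * n + 2 ∧ ∀ r, r < n → wper n (t + r) = e1 := by
  refine ⟨(n + 1) * (s / (n + 1) + 1), ?_, ?_, ?_⟩
  · have := Nat.div_add_mod s (n + 1)
    have := Nat.mod_lt s (show 0 < n + 1 by omega)
    rw [Nat.mul_add, Nat.mul_one]
    omega
  · have := Nat.div_add_mod s (n + 1)
    rw [Nat.mul_add, Nat.mul_one]
    omega
  · intro r hr
    have hmod : ((n + 1) * (s / (n + 1) + 1) + r) % (n + 1) = r := by
      rw [Nat.mul_add_mod]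
      exact Nat.mod_eq_of_lt (by omega)
    rw [wper, hmod, if_neg (by omega)]

end NotOmegaReg

namespace NotOmegaReg

/-! ### Assembling the contradicting word -/

lemma smono_add {f : ℕ → ℕ} (hf : StrictMono f) (a k : ℕ) : f a + k ≤ f (a + k) := by
  induction k with
  | zero => simp
  | succ k ih => have := hf (show a + k < a + (k + 1) by omega); omega

/-- Start offset of piece `j` inside the word `wper (N j)`. -/
def bB (c : ℕ → ℕ → ℕ) (j : ℕ) : ℕ := if j = 0 then 0 else c j 0

/-- Number of `V`-segments taken from piece `j`. -/
def KK (N : ℕ → ℕ) (j : ℕ) : ℕ := 2 * N j + 2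

/-- Length of piece `j`. -/
def LL (N : ℕ → ℕ) (c : ℕ → ℕ → ℕ) (j : ℕ) : ℕ := c j (KK N j) - bB c j

/-- Piece `j`: a factor of the word `wper (N j)`. -/
def PP (N : ℕ → ℕ) (c : ℕ → ℕ → ℕ) (j x : ℕ) : EdgeT 2 Unit Bool :=
  wper (N j) (bB c j + x)

/-- Cut points of the glued word. -/
def dd (N : ℕ → ℕ) (c : ℕ → ℕ → ℕ) (m : ℕ) : ℕ :=
  osum (LL N c) (locate (KK N) m) +
    (c (locate (KK N) m) (m - osum (KK N) (locate (KK N) m)) - bB c (locate (KK N) m))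

section Glued

variable (N : ℕ → ℕ) (c : ℕ → ℕ → ℕ) (hc : ∀ j, StrictMono (c j))

lemma bB_le (j : ℕ) : bB c j ≤ c j 0 := by
  unfold bB
  split
  · exact Nat.zero_le _
  · exact le_rfl

include hc in
lemma bB_le' (j y : ℕ) : bB c (j) ≤ c j y :=
  le_trans (bB_le c j) ((hc j).monotone (Nat.zero_le y))

lemma KK_pos (j : ℕ) : 1 ≤ KK N j := by unfold KK; omega

include hc in
lemma LL_pos (j : ℕ) : 1 ≤ LL N c j := by
  have h1 : c j 0 + KK N j ≤ c j (KK N j) := by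
    have := smono_add (hc j) 0 (KK N j)
    simpa using this
  have h2 := bB_le c j
  have h3 := KK_pos N j
  unfold LL
  omega

include hc in
lemma dd_succ (m : ℕ) :
    dd N c (m + 1) = osum (LL N c) (locate (KK N) m) +
      (c (locate (KK N) m) (m - osum (KK N) (locate (KK N) m) + 1) -
        bB c (locate (KK N) m)) := by
  have hKpos := KK_pos N
  obtain ⟨hm1, hm2⟩ := locate_spec (KK N) hKpos m
  rw [osum_succ] at hm2
  by_cases hcase : m + 1 < osum (KK N) (locate (KK N) m) + KK N (locate (KK N) m)
  · have hloc : locate (KK N) (m + 1) = locate (KK N) m :=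
      locate_eq (KK N) hKpos (by omega) (by rw [osum_succ]; omega)
    unfold dd
    rw [hloc]
    rw [show m + 1 - osum (KK N) (locate (KK N) m) =
      m - osum (KK N) (locate (KK N) m) + 1 by omega]
  · have heq : m + 1 = osum (KK N) (locate (KK N) m) + KK N (locate (KK N) m) := by omega
    have hloc : locate (KK N) (m + 1) = locate (KK N) m + 1 :=
      locate_eq (KK N) hKpos (by rw [osum_succ]; omega)
        (by rw [osum_succ, osum_succ]; have := hKpos (locate (KK N) m + 1); omega)
    unfold dd
    rw [hloc]
    rw [show m + 1 - osum (KK N) (locate (KK N) m + 1) = 0 by rw [osum_succ]; omega]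
    rw [show m - osum (KK N) (locate (KK N) m) + 1 = KK N (locate (KK N) m) by omega]
    rw [osum_succ]
    have hbj : bB c (locate (KK N) m + 1) = c (locate (KK N) m + 1) 0 := by
      unfold bB
      rw [if_neg (by omega)]
    rw [hbj, Nat.sub_self, Nat.add_zero]
    unfold LL
    omega

include hc in
lemma glued_mem (U V : Language (EdgeT 2 Unit Bool))
    (hU : SegOf (wper (N 0)) 0 (c 0 0) ∈ U)
    (hV : ∀ j m, SegOf (wper (N j)) (c j m) (c j (m + 1)) ∈ V) :
    glue (PP N c) (LL N c) ∈ OmegaCat U V := by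
  have hKpos := KK_pos N
  have hLpos := LL_pos N c hc
  refine ⟨dd N c, ?_, ?_, ?_⟩
  · apply strictMono_nat_of_lt_succ
    intro m
    rw [dd_succ N c hc m]
    unfold dd
    have h1 : c (locate (KK N) m) (m - osum (KK N) (locate (KK N) m)) <
        c (locate (KK N) m) (m - osum (KK N) (locate (KK N) m) + 1) :=
      hc _ (by omega)
    have h2 := bB_le' c hc (locate (KK N) m) (m - osum (KK N) (locate (KK N) m))
    omega
  · have hosK0 : osum (KK N) 0 = 0 := by simp [osum]
    have hosL0 : osum (LL N c) 0 = 0 := by simp [osum]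
    have hloc0 : locate (KK N) 0 = 0 :=
      locate_eq (KK N) hKpos (by omega) (by rw [osum_succ]; have := hKpos 0; omega)
    have hb0 : bB c 0 = 0 := by unfold bB; rw [if_pos rfl]
    have hd0 : dd N c 0 = c 0 0 := by
      unfold dd
      rw [hloc0, hosK0, hosL0, hb0]
      simp
    rw [hd0]
    have hy : c 0 0 ≤ LL N c 0 := by
      have := (hc 0).monotone (Nat.zero_le (KK N 0))
      unfold LL
      rw [hb0]
      omega
    have hseg := glue_seg (PP N c) (LL N c) hLpos 0 0 (c 0 0) hy
    rw [hosL0, Nat.zero_add, Nat.zero_add] at hseg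
    rw [hseg]
    rw [show PP N c 0 = fun u => wper (N 0) (bB c 0 + u) from rfl,
      seg_shift (wper (N 0)) (bB c 0) 0 (c 0 0), hb0, Nat.zero_add, Nat.zero_add]
    exact hU
  · intro m
    have hKp := KK_pos N
    obtain ⟨hm1, hm2⟩ := locate_spec (KK N) hKp m
    rw [osum_succ] at hm2
    set j := locate (KK N) m with hj
    set x := m - osum (KK N) j with hx
    have hdm : dd N c m = osum (LL N c) j + (c j x - bB c j) := rfl
    rw [hdm, dd_succ N c hc m, ← hj]
    have hxK : x + 1 ≤ KK N j := by omega
    have hyL : c j (x + 1) - bB c j ≤ LL N c j := by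
      have := (hc j).monotone hxK
      unfold LL
      have := bB_le' c hc j (x + 1)
      omega
    have hseg := glue_seg (PP N c) (LL N c) hLpos j (c j x - bB c j)
      (c j (x + 1) - bB c j) hyL
    rw [hseg]
    rw [show PP N c j = fun u => wper (N j) (bB c j + u) from rfl,
      seg_shift (wper (N j)) (bB c j) (c j x - bB c j) (c j (x + 1) - bB c j),
      show bB c j + (c j x - bB c j) = c j x by have := bB_le' c hc j x; omega,
      show bB c j + (c j (x + 1) - bB c j) = c j (x + 1) by
        have := bB_le' c hc j (x + 1); omega]
    exact hV j x

include hc in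
lemma glued_run (Q : ℕ) (hQ : Q < N Q) :
    ∃ t, ∀ r, r < Q → glue (PP N c) (LL N c) (t + r) = e1 := by
  have hLpos := LL_pos N c hc
  obtain ⟨t0, ht0a, ht0b, ht0c⟩ := wper_run (N Q) (c Q 0)
  have hbt : bB c Q ≤ t0 := le_trans (bB_le c Q) ht0a
  have h1 : c Q 0 + KK N Q ≤ c Q (KK N Q) := by
    have := smono_add (hc Q) 0 (KK N Q)
    simpa using this
  have hfit : t0 - bB c Q + N Q ≤ LL N c Q := by
    unfold LL
    unfold KK at h1 ⊢
    omega
  refine ⟨osum (LL N c) Q + (t0 - bB c Q), fun r hr => ?_⟩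
  rw [show osum (LL N c) Q + (t0 - bB c Q) + r = osum (LL N c) Q + (t0 - bB c Q + r) by omega]
  rw [glue_eq (PP N c) (LL N c) hLpos Q _ (by omega)]
  show wper (N Q) (bB c Q + (t0 - bB c Q + r)) = e1
  rw [show bB c Q + (t0 - bB c Q + r) = t0 + r by omega]
  exact ht0c r (by omega)

end Glued

end NotOmegaReg

/-- There is an RB-template whose set of infinite executions is not
ω-regular; the witness is the template `P⋆`. -/
theorem execInf_pstar_not_omegaRegular : ¬ IsOmegaRegular (execInf Pstar) := by
  open NotOmegaReg in
  rintro ⟨p, U, V, -, hLang⟩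
  -- each witness word `wper n` lies in some `OmegaCat (U i) (V i)`
  have hcov : ∀ n : ℕ, ∃ i : Fin p, wper n ∈ OmegaCat (U i) (V i) := by
    intro n
    have h := memA n
    rw [hLang] at h
    exact Set.mem_iUnion.mp h
  -- pigeonhole: one index captures infinitely many `n`
  have hinf : ∃ i : Fin p, {n | wper n ∈ OmegaCat (U i) (V i)}.Infinite := by
    by_contra hfin
    push_neg at hfin
    have huniv : (Set.univ : Set ℕ) ⊆
        ⋃ i : Fin p, {n | wper n ∈ OmegaCat (U i) (V i)} := by
      intro n _
      obtain ⟨i, hi⟩ := hcov n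
      exact Set.mem_iUnion.mpr ⟨i, hi⟩
    exact Set.infinite_univ ((Set.finite_iUnion hfin).subset huniv)
  obtain ⟨i0, hinf⟩ := hinf
  -- choose parameters `N j > j` and cut sequences `c j`
  have hN : ∀ j : ℕ, ∃ n, j < n ∧ wper n ∈ OmegaCat (U i0) (V i0) := by
    intro j
    obtain ⟨n, hn, hj⟩ := hinf.exists_gt j
    exact ⟨n, hj, hn⟩
  choose N hNgt hNmem using hN
  have hNmem' : ∀ j, ∃ c : ℕ → ℕ, StrictMono c ∧ SegOf (wper (N j)) 0 (c 0) ∈ U i0 ∧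
      ∀ m, SegOf (wper (N j)) (c m) (c (m + 1)) ∈ V i0 := fun j => hNmem j
  choose c hcmono hcU hcV using hNmem'
  -- the glued word
  have hWmem : glue (PP N c) (LL N c) ∈ OmegaCat (U i0) (V i0) :=
    glued_mem N c hcmono (U i0) (V i0) (hcU 0) (fun j m => hcV j m)
  have hWexec : glue (PP N c) (LL N c) ∈ execInf Pstar := by
    rw [hLang]
    exact Set.mem_iUnion.mpr ⟨i0, hWmem⟩
  obtain ⟨Nb, hNbpos, hbnd⟩ := boundedB hWexec
  obtain ⟨t, ht⟩ := glued_run N c hcmono Nb (hNgt Nb)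
  obtain ⟨r, hr, hrne⟩ := hbnd t
  exact hrne (ht r hr)
end

section
/- Let P be an RB-template (each letter of Σ_rdz labeling at most one edge) with reachability-unwinding P^⊸. For every n ∈ ℕ, the set of runs of the RB-system P^n equals the set {ρ^◦ : ρ a run of the RB-system (P^⊸)^n}, where ρ^◦ is obtained from ρ by erasing the component numbers from all states occurring in its configurations. -/
/-! ### Auxiliary lemmas -/

section Aux

variable {k : ℕ} {A S : Type}

lemma mem_satS {P : RBTemplate k A S} {J : Set S} {s : S} :
    s ∈ SatS P J ↔ ∀ X, SatClosed P J X → s ∈ X := Set.mem_sInter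

lemma satClosed_satS (P : RBTemplate k A S) (J : Set S) : SatClosed P J (SatS P J) := by
  constructor
  · intro s hs
    exact mem_satS.2 fun X hX => hX.1 hs
  · intro s a h t hs he hside
    refine mem_satS.2 fun X hX => hX.2 s a h t (mem_satS.1 hs X hX) he ?_
    intro l
    obtain ⟨s', t', hs', he'⟩ := hside l
    exact ⟨s', t', mem_satS.1 hs' X hX, he'⟩

lemma satR_subset {P : RBTemplate k A S} {J : Set S} {e : EdgeT k A S}
    (h : e ∈ SatR P J) : e ∈ P.R := by
  obtain ⟨s, a, hh, t, _, _, hR, _⟩ := h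
  exact hR

lemma rdz_sat {P : RBTemplate k A S} {ι : Type} {f g : ι → S} {a : A} {procs : Fin k → ι}
    (hT : RBTrans P f (.rdz a procs) g) {J : Set S} (hf : ∀ i, f i ∈ SatS P J) :
    (∀ j, (f (procs j), Sum.inl (a, j), g (procs j)) ∈ SatR P J) ∧
    ∀ i, g i ∈ SatS P J := by
  obtain ⟨hinj, hed, hfr⟩ := hT
  have hside : ∀ l : Fin k, ∃ s' t' : S, s' ∈ SatS P J ∧ (s', Sum.inl (a, l), t') ∈ P.R :=
    fun l => ⟨f (procs l), g (procs l), hf _, hed l⟩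
  refine ⟨fun j => ⟨f (procs j), a, j, g (procs j), rfl, hf _, hed j, hside⟩, ?_⟩
  intro i
  by_cases h : ∃ j, procs j = i
  · obtain ⟨j, rfl⟩ := h
    exact (satClosed_satS P J).2 _ a j _ (hf _) (hed j) hside
  · rw [hfr i (fun j hj => h ⟨j, hj⟩)]
    exact hf i

lemma bcast_sat {P : RBTemplate k A S} {ι : Type} {f g : ι → S}
    (hT : RBTrans P f .bcast g) {b : ℕ} (hf : ∀ i, f i ∈ SatS P (compI P b)) :
    ∀ i, g i ∈ SatS P (compI P (b + 1)) := fun i =>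
  (satClosed_satS P _).1 (show g i ∈ compI P (b + 1) from ⟨f i, hf i, hT i⟩)

lemma compAt_le_s5 {n m : ℕ} (h : n ≤ m) (i : ℕ) : compAt n m i ≤ m := by
  unfold compAt
  split
  · omega
  · have := Nat.mod_lt (i - n) (y := m + 1 - n) (by omega)
    omega

lemma compAt_succ_s5 {n m : ℕ} (h : n ≤ m) (i : ℕ) :
    compAt n m (i + 1) = compAt n m (compAt n m i + 1) := by
  by_cases hi : i ≤ m
  · rw [show compAt n m i = i from if_pos hi]
  · have hr : 0 < m + 1 - n := by omega
    have hj : (i - n) % (m + 1 - n) < m + 1 - n := Nat.mod_lt _ hr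
    rw [show compAt n m i = n + (i - n) % (m + 1 - n) from if_neg hi]
    have hkey : (i + 1 - n) % (m + 1 - n) = ((i - n) % (m + 1 - n) + 1) % (m + 1 - n) := by
      rw [show i + 1 - n = (i - n) + 1 by omega, Nat.add_mod (i - n) 1,
        Nat.add_mod ((i - n) % (m + 1 - n)) 1, Nat.mod_mod_of_dvd _ dvd_rfl]
    rw [show compAt n m (i + 1) = n + (i + 1 - n) % (m + 1 - n) from if_neg (by omega), hkey]
    by_cases h2 : (i - n) % (m + 1 - n) + 1 < m + 1 - n
    · rw [show compAt n m (n + (i - n) % (m + 1 - n) + 1) = n + (i - n) % (m + 1 - n) + 1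
        from if_pos (by omega), Nat.mod_eq_of_lt h2]
      omega
    · rw [show compAt n m (n + (i - n) % (m + 1 - n) + 1)
          = n + (n + (i - n) % (m + 1 - n) + 1 - n) % (m + 1 - n) from if_neg (by omega)]
      congr 1
      congr 1
      omega

lemma compI_congr (P : RBTemplate k A S) {i j : ℕ} (h : compI P i = compI P j) :
    compI P (i + 1) = compI P (j + 1) := by
  simp only [compI, h]

lemma compI_period_s5 (P : RBTemplate k A S) {n m : ℕ} (hL : IsLasso P n m) :
    ∀ t, compI P (n + (m + 1 - n) + t) = compI P (n + t) := by
  have hnm : n ≤ m := hL.1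
  intro t
  induction t with
  | zero =>
    have h1 : n + (m + 1 - n) + 0 = m + 1 := by omega
    rw [h1, Nat.add_zero]
    exact hL.2.1.symm
  | succ t ih =>
    have h1 : n + (m + 1 - n) + (t + 1) = (n + (m + 1 - n) + t) + 1 := by omega
    have h2 : n + (t + 1) = (n + t) + 1 := by omega
    rw [h1, h2]
    exact compI_congr P ih

lemma compI_mod (P : RBTemplate k A S) {n m : ℕ} (hL : IsLasso P n m) :
    ∀ j, compI P (n + j) = compI P (n + j % (m + 1 - n)) := by
  have hr : 0 < m + 1 - n := by have := hL.1; omega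
  intro j
  induction j using Nat.strong_induction_on with
  | _ j ih =>
    by_cases hjr : j < m + 1 - n
    · rw [Nat.mod_eq_of_lt hjr]
    · rw [Nat.mod_eq_sub_mod (by omega), ← ih (j - (m + 1 - n)) (by omega),
        show n + j = n + (m + 1 - n) + (j - (m + 1 - n)) by omega]
      exact compI_period_s5 P hL _

lemma compI_compAt_s5 (P : RBTemplate k A S) {n m : ℕ} (hL : IsLasso P n m) (i : ℕ) :
    compI P (compAt n m i) = compI P i := by
  have hnm : n ≤ m := hL.1
  unfold compAt
  split
  · rfl
  · rename_i hi
    rw [← compI_mod P hL (i - n), show n + (i - n) = i by omega]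

/-- Projecting a transition of the unwinding down to a transition of `P`. -/
lemma unwind_trans_proj {P : RBTemplate k A S} {n m : ℕ} {ι : Type}
    {f g : ι → S × ℕ} {σ : Sync k A ι}
    (h : RBTrans (unwind P n m) f σ g) :
    RBTrans P (fun i => (f i).1) σ (fun i => (g i).1) := by
  cases σ with
  | bcast =>
    intro i
    show ((f i).1, Sum.inr (), (g i).1) ∈ P.R
    rcases h i with ⟨s, t, ς, c, _, he, _⟩ | ⟨s, t, c, _, he, _, hR⟩
    · simp only [Prod.mk.injEq] at he
      exact absurd he.2.1 (by simp)
    · simp only [Prod.mk.injEq] at he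
      have h1 : (f i).1 = s := by rw [he.1]
      have h2 : (g i).1 = t := by rw [he.2.2]
      rw [h1, h2]
      exact hR
  | rdz a procs =>
    obtain ⟨hinj, hed, hfr⟩ := h
    refine ⟨hinj, ?_, fun i hi => congrArg Prod.fst (hfr i hi)⟩
    intro j
    show ((f (procs j)).1, Sum.inl (a, j), (g (procs j)).1) ∈ P.R
    rcases hed j with ⟨s, t, ς, c, _, he, hR⟩ | ⟨s, t, c, _, he, _, _⟩
    · simp only [Prod.mk.injEq] at he
      have h1 : (f (procs j)).1 = s := by rw [he.1]
      have h2 : (g (procs j)).1 = t := by rw [he.2.2]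
      rw [h1, h2, he.2.1]
      exact satR_subset hR
    · simp only [Prod.mk.injEq] at he
      exact absurd he.2.1 (by simp)

open Classical in
/-- Number of broadcasts among the first `t` transitions. -/
noncomputable def bcount {k : ℕ} {A ι : Type} (sync : ℕ → Sync k A ι) : ℕ → ℕ
  | 0 => 0
  | t + 1 => bcount sync t + if sync t = Sync.bcast then 1 else 0

lemma lift_invariant {P : RBTemplate k A S} {ι : Type}
    {conf : ℕ → ι → S} {sync : ℕ → Sync k A ι}
    (hinit : ∀ i, conf 0 i ∈ P.I) :
    ∀ t, (∀ t', t' < t → RBTrans P (conf t') (sync t') (conf (t' + 1))) →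
      ∀ i, conf t i ∈ SatS P (compI P (bcount sync t)) := by
  intro t
  induction t with
  | zero =>
    intro _ i
    exact (satClosed_satS P _).1 (show conf 0 i ∈ compI P 0 from hinit i)
  | succ t ih =>
    intro hv i
    have hprev := ih (fun t' ht' => hv t' (by omega))
    have hstep := hv t (by omega)
    cases hσ : sync t with
    | bcast =>
      rw [hσ] at hstep
      have hb : bcount sync (t + 1) = bcount sync t + 1 := by simp [bcount, hσ]
      rw [hb]
      exact bcast_sat hstep hprev i
    | rdz a procs =>
      rw [hσ] at hstep
      have hb : bcount sync (t + 1) = bcount sync t := by simp [bcount, hσ]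
      rw [hb]
      exact (rdz_sat hstep hprev).2 i

lemma lift_step_bcast {P : RBTemplate k A S} {n m : ℕ} (hL : IsLasso P n m) {ι : Type}
    {f g : ι → S} {b : ℕ}
    (hv : RBTrans P f .bcast g) (hsat : ∀ i, f i ∈ SatS P (compI P b)) :
    RBTrans (unwind P n m) (fun i => (f i, compAt n m b)) .bcast
      (fun i => (g i, compAt n m (b + 1))) := by
  intro i
  show ((f i, compAt n m b), Sum.inr (), (g i, compAt n m (b + 1))) ∈ (unwind P n m).R
  refine Or.inr ⟨f i, g i, compAt n m b, compAt_le_s5 hL.1 b, ?_, ?_, hv i⟩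
  · rw [compAt_succ_s5 hL.1 b]
  · rw [compI_compAt_s5 P hL b]
    exact hsat i

lemma lift_step_rdz {P : RBTemplate k A S} {n m : ℕ} (hL : IsLasso P n m) {ι : Type}
    {f g : ι → S} {a : A} {procs : Fin k → ι} {b : ℕ}
    (hv : RBTrans P f (.rdz a procs) g) (hsat : ∀ i, f i ∈ SatS P (compI P b)) :
    RBTrans (unwind P n m) (fun i => (f i, compAt n m b)) (.rdz a procs)
      (fun i => (g i, compAt n m b)) := by
  have hR := (rdz_sat hv hsat).1
  obtain ⟨hinj, hed, hfr⟩ := hv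
  refine ⟨hinj, ?_, fun i hi => by
    show (g i, compAt n m b) = (f i, compAt n m b)
    rw [hfr i hi]⟩
  intro j
  show ((f (procs j), compAt n m b), Sum.inl (a, j), (g (procs j), compAt n m b)) ∈ (unwind P n m).R
  refine Or.inl ⟨f (procs j), g (procs j), (a, j), compAt n m b, compAt_le_s5 hL.1 b, rfl, ?_⟩
  rw [compI_compAt_s5 P hL b]
  exact hR j

end Aux

/-- For every `n`, the runs (finite and infinite) of the RB-system `P^n`
are exactly the runs of the RB-system `(P^⊸)^n` with component numbers erased. -/
theorem runs_eq_erased_runs_of_unwinding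
    {k : ℕ} {A S : Type} [Fintype A] [Fintype S] (hk : 2 ≤ k)
    (P : RBTemplate k A S) (hTot : P.BTotal) (hU : P.UniqLab)
    (n₀ m : ℕ) (hL : IsLasso P n₀ m) (N : ℕ) :
    (∀ ρ : FinPath (unwind P n₀ m) (Fin N), ρ.IsRun →
      ∃ q : FinPath P (Fin N), q.IsRun ∧ q.len = ρ.len ∧
        (∀ t, t ≤ ρ.len → ∀ i, q.conf t i = (ρ.conf t i).1) ∧
        (∀ t, t < ρ.len → q.sync t = ρ.sync t)) ∧
    (∀ q : FinPath P (Fin N), q.IsRun →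
      ∃ ρ : FinPath (unwind P n₀ m) (Fin N), ρ.IsRun ∧ ρ.len = q.len ∧
        (∀ t, t ≤ q.len → ∀ i, (ρ.conf t i).1 = q.conf t i) ∧
        (∀ t, t < q.len → ρ.sync t = q.sync t)) ∧
    (∀ ρ : InfPath (unwind P n₀ m) (Fin N), ρ.IsRun →
      ∃ q : InfPath P (Fin N), q.IsRun ∧
        (∀ t i, q.conf t i = (ρ.conf t i).1) ∧ (∀ t, q.sync t = ρ.sync t)) ∧
    (∀ q : InfPath P (Fin N), q.IsRun →
      ∃ ρ : InfPath (unwind P n₀ m) (Fin N), ρ.IsRun ∧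
        (∀ t i, (ρ.conf t i).1 = q.conf t i) ∧ (∀ t, ρ.sync t = q.sync t)) := by
  refine ⟨?_, ?_, ?_, ?_⟩
  · -- finite, erase
    intro ρ hρ
    refine ⟨⟨ρ.len, fun t i => (ρ.conf t i).1, ρ.sync, fun t ht => unwind_trans_proj (ρ.valid t ht)⟩,
      fun i => (hρ i).1, rfl, fun t _ i => rfl, fun t _ => rfl⟩
  · -- finite, lift
    intro q hq
    refine ⟨⟨q.len, fun t i => (q.conf t i, compAt n₀ m (bcount q.sync t)), q.sync, ?_⟩,
      ?_, rfl, fun t _ i => rfl, fun t _ => rfl⟩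
    · intro t ht
      have hsat := lift_invariant hq t (fun t' ht' => q.valid t' (by omega))
      show RBTrans (unwind P n₀ m)
        (fun i => (q.conf t i, compAt n₀ m (bcount q.sync t))) (q.sync t)
        (fun i => (q.conf (t + 1) i, compAt n₀ m (bcount q.sync (t + 1))))
      have hv := q.valid t ht
      cases hσ : q.sync t with
      | bcast =>
        rw [hσ] at hv
        have hb : bcount q.sync (t + 1) = bcount q.sync t + 1 := by simp [bcount, hσ]
        rw [hb]
        exact lift_step_bcast hL hv hsat
      | rdz a procs =>
        rw [hσ] at hv
        have hb : bcount q.sync (t + 1) = bcount q.sync t := by simp [bcount, hσ]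
        rw [hb]
        exact lift_step_rdz hL hv hsat
    · intro i
      exact ⟨hq i, by simp [bcount, compAt]⟩
  · -- infinite, erase
    intro ρ hρ
    refine ⟨⟨fun t i => (ρ.conf t i).1, ρ.sync, fun t => unwind_trans_proj (ρ.valid t)⟩,
      fun i => (hρ i).1, fun t i => rfl, fun t => rfl⟩
  · -- infinite, lift
    intro q hq
    refine ⟨⟨fun t i => (q.conf t i, compAt n₀ m (bcount q.sync t)), q.sync, ?_⟩,
      ?_, fun t i => rfl, fun t => rfl⟩
    · intro t
      have hsat := lift_invariant hq t (fun t' _ => q.valid t')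
      show RBTrans (unwind P n₀ m)
        (fun i => (q.conf t i, compAt n₀ m (bcount q.sync t))) (q.sync t)
        (fun i => (q.conf (t + 1) i, compAt n₀ m (bcount q.sync (t + 1))))
      have hv := q.valid t
      cases hσ : q.sync t with
      | bcast =>
        rw [hσ] at hv
        have hb : bcount q.sync (t + 1) = bcount q.sync t + 1 := by simp [bcount, hσ]
        rw [hb]
        exact lift_step_bcast hL hv hsat
      | rdz a procs =>
        rw [hσ] at hv
        have hb : bcount q.sync (t + 1) = bcount q.sync t := by simp [bcount, hσ]
        rw [hb]
        exact lift_step_rdz hL hv hsat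
    · intro i
      exact ⟨hq i, by simp [bcount, compAt]⟩
end

section
/- (Pseudo-cycle pumping) Let P be an RB-template, and let π = t_1 … t_m be a pseudo-cycle of the system P^n, i.e., a finite nonempty path whose initial configuration f and final configuration f' are twins. Then there is an infinite path π' = t'_1 t'_2 … of P^n starting at f such that for every q ≥ 0 and every i ∈ {1,…,m}, the action of t'_{qm+i} equals the action of t_i (where the action of a broadcast transition is 𝔟 and the action of a rendezvous transition with synchronization tuple ((i_1,a_1),…,(i_k,a_k)) is a). -/
/-! ### Pseudo-cycles (twins) -/

/-- Two configurations are twins if they have the same number of processes in each state. -/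
def Twins {S ι : Type} (f g : ι → S) : Prop :=
  ∀ s : S, Nat.card {i : ι // f i = s} = Nat.card {i : ι // g i = s}

/-- A pseudo-cycle: a finite nonempty path whose initial and final configurations are twins. -/
def FinPath.IsPseudoCycle {k : ℕ} {A S : Type} {P : RBTemplate k A S} {ι : Type}
    (p : FinPath P ι) : Prop :=
  0 < p.len ∧ Twins (p.conf 0) (p.conf p.len)

/-- The action taken in a transition: `none` for the broadcast `𝔟`,
`some a` for a rendezvous on action `a`. -/
def Sync.actn {k : ℕ} {A ι : Type} (σ : Sync k A ι) : Option A :=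
  match σ with
  | .bcast => none
  | .rdz a _ => some a

/-! ### Auxiliary machinery for pumping -/

/-- Relabel the processes of a synchronization label by a permutation. -/
def Sync.permute {k : ℕ} {A ι : Type} (τ : Equiv.Perm ι) : Sync k A ι → Sync k A ι
  | .bcast => .bcast
  | .rdz a procs => .rdz a (fun j => τ.symm (procs j))

lemma Sync.actn_permute {k : ℕ} {A ι : Type} (τ : Equiv.Perm ι) (σ : Sync k A ι) :
    (σ.permute τ).actn = σ.actn := by cases σ <;> rfl

lemma RBTrans.permute {k : ℕ} {A S : Type} {P : RBTemplate k A S} {ι : Type}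
    (τ : Equiv.Perm ι) {f g : ι → S} {σ : Sync k A ι} (h : RBTrans P f σ g) :
    RBTrans P (fun i => f (τ i)) (σ.permute τ) (fun i => g (τ i)) := by
  cases σ with
  | bcast => exact fun i => h (τ i)
  | rdz a procs =>
    obtain ⟨hinj, hed, hfix⟩ := h
    refine ⟨fun x y hxy => hinj (τ.symm.injective hxy), fun j => ?_, fun i hi => ?_⟩
    · simpa using hed j
    · exact hfix (τ i) fun j hj => hi j (by simp [hj])

lemma exists_perm_of_twins {S : Type} {n : ℕ} (f g : Fin n → S) (h : Twins f g) :
    ∃ e : Equiv.Perm (Fin n), ∀ j, g j = f (e j) := by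
  classical
  have φ : ∀ s : S, {i : Fin n // g i = s} ≃ {i : Fin n // f i = s} := fun s =>
    Fintype.equivOfCardEq (by
      rw [← Nat.card_eq_fintype_card, ← Nat.card_eq_fintype_card]
      exact (h s).symm)
  refine ⟨(Equiv.sigmaFiberEquiv g).symm.trans
    ((Equiv.sigmaCongrRight φ).trans (Equiv.sigmaFiberEquiv f)), fun j => ?_⟩
  exact ((φ (g j)) ⟨j, rfl⟩).2.symm

lemma pump_key {m : ℕ} (hm : 0 < m) (q i : ℕ) (hi : i < m) :
    (q * m + i) % m = i ∧ (q * m + i) / m = q := by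
  constructor
  · rw [Nat.add_comm, Nat.add_mul_mod_self_right, Nat.mod_eq_of_lt hi]
  · rw [Nat.add_comm, Nat.add_mul_div_right _ _ hm, Nat.div_eq_of_lt hi, Nat.zero_add]

/-- **Pseudo-cycle pumping.** A pseudo-cycle `p` of `P^n` can be pumped
to an infinite path of `P^n`, starting at the initial configuration of `p`, which
repeatedly goes through the actions of `p`. -/
theorem pseudo_cycle_pumping
    {k : ℕ} {A S : Type} [Fintype A] [Fintype S] (hk : 2 ≤ k)
    (P : RBTemplate k A S) (hTot : P.BTotal)
    (n : ℕ) (p : FinPath P (Fin n)) (hpc : p.IsPseudoCycle) :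
    ∃ p' : InfPath P (Fin n), p'.conf 0 = p.conf 0 ∧
      ∀ (q i : ℕ), i < p.len →
        (p'.sync (q * p.len + i)).actn = (p.sync i).actn := by
  classical
  obtain ⟨hm, htw⟩ := hpc
  obtain ⟨e, he⟩ := exists_perm_of_twins (p.conf 0) (p.conf p.len) htw
  set m := p.len with hmdef
  refine ⟨⟨fun t j => p.conf (t % m) ((e ^ (t / m)) j),
          fun t => (p.sync (t % m)).permute (e ^ (t / m)), ?_⟩, ?_, ?_⟩
  · intro t
    set q := t / m with hq
    set i := t % m with hi'
    have hi : i < m := Nat.mod_lt _ hm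
    have ht : q * m + i = t := by rw [hq, hi', Nat.mul_comm, Nat.div_add_mod]
    have hstep := (p.valid i hi).permute (e ^ q)
    rcases Nat.lt_or_ge (i + 1) m with hlt | hge
    · have h1 : t + 1 = q * m + (i + 1) := by omega
      rw [h1]; beta_reduce
      rw [(pump_key hm q (i + 1) hlt).1, (pump_key hm q (i + 1) hlt).2]
      exact hstep
    · have him : i + 1 = m := by omega
      have h1 : t + 1 = (q + 1) * m + 0 := by
        rw [Nat.add_mul, Nat.one_mul, Nat.add_zero]; omega
      rw [h1]; beta_reduce
      rw [(pump_key hm (q + 1) 0 hm).1, (pump_key hm (q + 1) 0 hm).2]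
      have hconf : (fun j => p.conf 0 ((e ^ (q + 1)) j))
          = fun j => p.conf (i + 1) ((e ^ q) j) := by
        funext j
        rw [pow_succ', Equiv.Perm.mul_apply, ← he, him]
      rw [hconf]
      exact hstep
  · funext j
    simp
  · intro q i hi
    simp only [Sync.actn_permute, (pump_key hm q i hi).1]
end
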